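/- arXiv:1011.6676 — 5 statements merged into one kernel-verified Lean document; each statement's English description precedes it below -/
import Mathlib

section
/- Let p be an odd prime, let λ be an integer, and let d ∈ {0,1,...,(p-1)/2}. Define a_p^{(d)}(λ) = Σ_{x=0}^{p-1} x^d · ((x(x-1)(x-λ))/p), where (·/p) is the Legendre symbol. Then a_p^{(d)}(λ) ≡ (-1)^{(p+1)/2} · λ^d · 4^{-d} · Σ_{k=0}^{(p-1)/2} C(2k,k)·C(2(k+d),k+d)·λ^k·16^{-k} − δ_{d,(p-1)/2} (mod p), where δ_{d,(p-1)/2} equals 1 if d = (p-1)/2 and 0 otherwise. -/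
open Finset

lemma sum_range_eq_sum_zmod {p : ℕ} [NeZero p] {M : Type*} [AddCommMonoid M] (f : ZMod p → M) :
    ∑ x ∈ range p, f (x : ZMod p) = ∑ y : ZMod p, f y := by
  refine Finset.sum_bij' (fun x _ => ((x : ZMod p))) (fun (y : ZMod p) _ => y.val)
    (fun a _ => Finset.mem_univ _) (fun b _ => Finset.mem_range.mpr (ZMod.val_lt b))
    (fun a ha => ZMod.val_cast_of_lt (Finset.mem_range.mp ha))
    (fun b _ => ZMod.natCast_rightInverse b) (fun a _ => rfl)

lemma sum_pow_zmod (p : ℕ) [Fact p.Prime] {n : ℕ} (hn : n ≠ 0) :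
    ∑ x : ZMod p, x ^ n = if (p - 1) ∣ n then -1 else 0 := by
  classical
  have h := FiniteField.sum_pow_units (ZMod p) n
  rw [ZMod.card] at h
  rw [← h]
  let φ : (ZMod p)ˣ ↪ ZMod p := ⟨fun x ↦ x, Units.val_injective⟩
  have hmap : Finset.univ.map φ = Finset.univ \ {0} := by
    ext x
    simp only [Finset.mem_map, Finset.mem_univ, true_and, Finset.mem_sdiff,
      Finset.mem_singleton, φ, Function.Embedding.coeFn_mk]
    exact ⟨fun ⟨a, ha⟩ => ha ▸ a.ne_zero, fun hx => ⟨Units.mk0 x hx, rfl⟩⟩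
  calc ∑ x : ZMod p, x ^ n
      = ∑ x ∈ Finset.univ \ {(0 : ZMod p)}, x ^ n := by
        rw [← Finset.sum_sdiff (Finset.subset_univ {0}), Finset.sum_singleton,
          zero_pow hn, add_zero]
    _ = ∑ x : (ZMod p)ˣ, (x : ZMod p) ^ n := by rw [← hmap, Finset.sum_map]; rfl

lemma cb_cong (p : ℕ) [Fact p.Prime] (hodd : Odd p) :
    ∀ k : ℕ, k ≤ (p - 1) / 2 →
      ((2 * k).choose k : ZMod p) = (-4) ^ k * (((p - 1) / 2).choose k : ZMod p) := by
  have hp3 : 3 ≤ p := by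
    have h2 := (Fact.out : p.Prime).two_le
    rcases hodd with ⟨t, ht⟩; omega
  set m := (p - 1) / 2 with hm
  have hp : p = 2 * m + 1 := by rcases hodd with ⟨t, ht⟩; omega
  intro k
  induction k with
  | zero => intro _; simp
  | succ k ih =>
    intro hk1
    have hk : k ≤ m := by omega
    have IH := ih hk
    have h1 : ((k + 1 : ℕ) : ZMod p) ≠ 0 := by
      rw [Ne, ZMod.natCast_eq_zero_iff]
      intro hdvd
      have := Nat.le_of_dvd (Nat.succ_pos k) hdvd
      omega
    have h2 : (2 : ZMod p) ≠ 0 := by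
      have h2' : ((2 : ℕ) : ZMod p) ≠ 0 := by
        rw [Ne, ZMod.natCast_eq_zero_iff]
        intro hdvd; have := Nat.le_of_dvd two_pos hdvd; omega
      simpa using h2'
    apply mul_right_cancel₀ (mul_ne_zero h1 h2)
    have hnat1 : (2 * (k + 1)).choose (k + 1) * ((k + 1) * 2) =
        2 * (2 * k + 1) * ((2 * k).choose k) * 2 := by
      have h := Nat.succ_mul_centralBinom_succ k
      simp only [Nat.centralBinom_eq_two_mul_choose] at h
      calc (2 * (k + 1)).choose (k + 1) * ((k + 1) * 2)
          = (k + 1) * (2 * (k + 1)).choose (k + 1) * 2 := by ring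
        _ = 2 * (2 * k + 1) * ((2 * k).choose k) * 2 := by rw [h]
    have e1 := congrArg (Nat.cast : ℕ → ZMod p) hnat1
    push_cast at e1
    have hnat2 := Nat.choose_succ_right_eq m k
    have e2 := congrArg (Nat.cast : ℕ → ZMod p) hnat2
    push_cast [-Nat.cast_sub] at e2
    have hnat3 : 2 * (m - k) + (2 * k + 1) = p := by omega
    have e3 := congrArg (Nat.cast : ℕ → ZMod p) hnat3
    rw [ZMod.natCast_self] at e3
    push_cast [-Nat.cast_sub] at e3
    push_cast
    linear_combination e1 + (4 * (2 * (k : ZMod p) + 1)) * IH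
      - 2 * (-4 : ZMod p) ^ (k + 1) * e2
      + (-4 : ZMod p) ^ (k + 1) * ((m.choose k : ZMod p)) * e3
      + 8 * (-4 : ZMod p) ^ k * ((m.choose k : ZMod p)) * e3



/-- Theorem 1.1: for an odd prime `p`, an integer `λ` and `d ∈ {0, ..., (p-1)/2}`,
`a_p^{(d)}(λ) ≡ (-1)^{(p+1)/2} (λ/4)^d ∑_{k=0}^{(p-1)/2} C(2k,k) C(2(k+d),k+d) λ^k / 16^k
  - δ_{d,(p-1)/2} (mod p)`. -/
theorem stmt_0 (p : ℕ) [Fact p.Prime] (hodd : Odd p) (lam : ℤ) (d : ℕ)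
    (hd : d ≤ (p - 1) / 2) :
    ((∑ x ∈ Finset.range p, (x : ℤ) ^ d *
        legendreSym p ((x : ℤ) * ((x : ℤ) - 1) * ((x : ℤ) - lam)) : ℤ) : ZMod p) =
      (-1 : ZMod p) ^ ((p + 1) / 2) * (lam : ZMod p) ^ d * ((4 : ZMod p)⁻¹) ^ d *
          (∑ k ∈ Finset.range ((p - 1) / 2 + 1),
            (Nat.choose (2 * k) k : ZMod p) * (Nat.choose (2 * (k + d)) (k + d) : ZMod p) *
              (lam : ZMod p) ^ k * ((16 : ZMod p)⁻¹) ^ k) -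
        (if d = (p - 1) / 2 then 1 else 0) := by
  classical
  have hp3 : 3 ≤ p := by
    have h2 := (Fact.out : p.Prime).two_le
    rcases hodd with ⟨t, ht⟩; omega
  set m := (p - 1) / 2 with hm
  have hp : p = 2 * m + 1 := by rcases hodd with ⟨t, ht⟩; omega
  have hm1 : 1 ≤ m := by omega
  -- Step A
  have hA : ((∑ x ∈ Finset.range p, (x : ℤ) ^ d *
        legendreSym p ((x : ℤ) * ((x : ℤ) - 1) * ((x : ℤ) - lam)) : ℤ) : ZMod p)
      = ∑ y : ZMod p, y ^ d * (y * (y - 1) * (y - (lam : ZMod p))) ^ m := by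
    push_cast
    rw [← sum_range_eq_sum_zmod (fun y => y ^ d * (y * (y - 1) * (y - (lam : ZMod p))) ^ m)]
    apply Finset.sum_congr rfl
    intro x _
    rw [legendreSym.eq_pow]
    have hq : p / 2 = m := by omega
    rw [hq]
    push_cast
    ring
  -- coefficients
  set c : ℕ → ℕ → ZMod p := fun i j =>
    ((-1 : ZMod p) ^ (i + m) * (m.choose i : ZMod p)) *
      ((-1 : ZMod p) ^ (j + m) * (lam : ZMod p) ^ (m - j) * (m.choose j : ZMod p)) with hc
  -- Step B : pointwise expansion
  have hB : ∀ y : ZMod p, y ^ d * (y * (y - 1) * (y - (lam : ZMod p))) ^ m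
      = ∑ i ∈ Finset.range (m + 1), ∑ j ∈ Finset.range (m + 1),
          c i j * y ^ (d + m + i + j) := by
    intro y
    rw [mul_pow, mul_pow, sub_pow y 1 m, sub_pow y (lam : ZMod p) m, mul_assoc,
      Finset.sum_mul_sum, Finset.mul_sum, Finset.mul_sum]
    apply Finset.sum_congr rfl
    intro i _
    rw [Finset.mul_sum, Finset.mul_sum]
    apply Finset.sum_congr rfl
    intro j _
    simp only [hc, one_pow]
    ring
  -- Step C : sum over y
  have hC : (∑ y : ZMod p, y ^ d * (y * (y - 1) * (y - (lam : ZMod p))) ^ m)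
      = ∑ i ∈ Finset.range (m + 1), ∑ j ∈ Finset.range (m + 1),
          c i j * (if 2 * m ∣ (d + m + i + j) then (-1 : ZMod p) else 0) := by
    simp only [hB]
    rw [Finset.sum_comm]
    apply Finset.sum_congr rfl
    intro i _
    rw [Finset.sum_comm]
    apply Finset.sum_congr rfl
    intro j _
    rw [← Finset.mul_sum]
    congr 1
    rw [sum_pow_zmod p (show d + m + i + j ≠ 0 by omega)]
    have hpm : p - 1 = 2 * m := by omega
    rw [hpm]
  -- split the indicator
  have hsplit : ∀ i ∈ Finset.range (m + 1), ∀ j ∈ Finset.range (m + 1),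
      c i j * (if 2 * m ∣ (d + m + i + j) then (-1 : ZMod p) else 0)
      = (if i + j + d = m then -c i j else 0)
        + (if d = m ∧ i = m ∧ j = m then -c i j else 0) := by
    intro i hi j hj
    simp only [Finset.mem_range] at hi hj
    by_cases h1 : i + j + d = m
    · rw [if_pos (show 2 * m ∣ d + m + i + j from ⟨1, by omega⟩), if_pos h1,
        if_neg (by omega)]
      ring
    · by_cases h2 : d = m ∧ i = m ∧ j = m
      · rw [if_pos (show 2 * m ∣ d + m + i + j from ⟨2, by omega⟩), if_neg h1, if_pos h2]
        ring
      · rw [if_neg ?_, if_neg h1, if_neg h2, mul_zero, add_zero]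
        rintro ⟨t, ht⟩
        have ht2 : t ≤ 2 := by nlinarith
        interval_cases t <;> omega
  have hC2 : (∑ y : ZMod p, y ^ d * (y * (y - 1) * (y - (lam : ZMod p))) ^ m)
      = (∑ i ∈ Finset.range (m + 1), ∑ j ∈ Finset.range (m + 1),
          (if i + j + d = m then -c i j else 0))
        + (∑ i ∈ Finset.range (m + 1), ∑ j ∈ Finset.range (m + 1),
          (if d = m ∧ i = m ∧ j = m then -c i j else 0)) := by
    rw [hC, ← Finset.sum_add_distrib]
    apply Finset.sum_congr rfl
    intro i hi
    rw [← Finset.sum_add_distrib]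
    exact Finset.sum_congr rfl fun j hj => hsplit i hi j hj
  -- first double sum
  have hS1 : (∑ i ∈ Finset.range (m + 1), ∑ j ∈ Finset.range (m + 1),
      (if i + j + d = m then -c i j else 0))
      = ∑ i ∈ Finset.range (m - d + 1), -c i (m - d - i) := by
    have inner : ∀ i ∈ Finset.range (m + 1),
        (∑ j ∈ Finset.range (m + 1), if i + j + d = m then -c i j else 0)
        = if i + d ≤ m then -c i (m - d - i) else 0 := by
      intro i hi
      simp only [Finset.mem_range] at hi
      by_cases h : i + d ≤ m
      · rw [if_pos h, Finset.sum_eq_single (m - d - i)]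
        · rw [if_pos (by omega)]
        · intro j hj hne
          simp only [Finset.mem_range] at hj
          rw [if_neg (by omega)]
        · intro habs
          exact absurd (Finset.mem_range.mpr (by omega)) habs
      · rw [if_neg h]
        apply Finset.sum_eq_zero
        intro j hj
        rw [if_neg (by omega)]
    rw [Finset.sum_congr rfl inner]
    rw [← Finset.sum_subset (show Finset.range (m - d + 1) ⊆ Finset.range (m + 1) from
        Finset.range_subset_range.mpr (by omega))]
    · apply Finset.sum_congr rfl
      intro i hi
      simp only [Finset.mem_range] at hi
      rw [if_pos (by omega)]
    · intro i hi hni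
      simp only [Finset.mem_range] at hi hni
      rw [if_neg (by omega)]
  -- second double sum
  have hcmm : c m m = 1 := by
    simp only [hc, Nat.choose_self, Nat.cast_one, mul_one, Nat.sub_self, pow_zero]
    rw [← pow_add]
    exact Even.neg_one_pow ⟨m + m, by ring⟩
  have hS2 : (∑ i ∈ Finset.range (m + 1), ∑ j ∈ Finset.range (m + 1),
      (if d = m ∧ i = m ∧ j = m then -c i j else 0))
      = if d = m then -1 else 0 := by
    by_cases hdm : d = m
    · rw [if_pos hdm]
      have inner : ∀ i ∈ Finset.range (m + 1),
          (∑ j ∈ Finset.range (m + 1), if d = m ∧ i = m ∧ j = m then -c i j else 0)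
          = if i = m then -c m m else 0 := by
        intro i hi
        by_cases him : i = m
        · subst him
          rw [if_pos rfl, Finset.sum_eq_single m]
          · rw [if_pos ⟨hdm, rfl, rfl⟩]
          · intro j hj hne
            rw [if_neg (by tauto)]
          · intro habs
            exact absurd (Finset.mem_range.mpr (by omega)) habs
        · rw [if_neg him]
          apply Finset.sum_eq_zero
          intro j hj
          rw [if_neg (by tauto)]
      rw [Finset.sum_congr rfl inner, Finset.sum_eq_single m]
      · rw [if_pos rfl, hcmm]
      · intro i hi hne
        rw [if_neg hne]
      · intro habs
        exact absurd (Finset.mem_range.mpr (by omega)) habs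
    · rw [if_neg hdm]
      apply Finset.sum_eq_zero
      intro i hi
      apply Finset.sum_eq_zero
      intro j hj
      rw [if_neg (by tauto)]
  -- RHS truncation
  have h2z : (2 : ZMod p) ≠ 0 := by
    have h2' : ((2 : ℕ) : ZMod p) ≠ 0 := by
      rw [Ne, ZMod.natCast_eq_zero_iff]
      intro hdvd; have := Nat.le_of_dvd two_pos hdvd; omega
    simpa using h2'
  have h4z : (4 : ZMod p) ≠ 0 := by
    have : (4 : ZMod p) = 2 * 2 := by norm_num
    rw [this]; exact mul_ne_zero h2z h2z
  have h16z : (16 : ZMod p) ≠ 0 := by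
    have : (16 : ZMod p) = 4 * 4 := by norm_num
    rw [this]; exact mul_ne_zero h4z h4z
  set F : ℕ → ZMod p := fun k =>
    (Nat.choose (2 * k) k : ZMod p) * (Nat.choose (2 * (k + d)) (k + d) : ZMod p) *
      (lam : ZMod p) ^ k * ((16 : ZMod p)⁻¹) ^ k with hF
  have htrunc : (∑ k ∈ Finset.range (m + 1), F k) = ∑ k ∈ Finset.range (m - d + 1), F k := by
    rw [← Finset.sum_subset (show Finset.range (m - d + 1) ⊆ Finset.range (m + 1) from
        Finset.range_subset_range.mpr (by omega))]
    intro k hk hnk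
    simp only [Finset.mem_range] at hk hnk
    have hdvd : p ∣ Nat.choose (2 * (k + d)) (k + d) := by
      apply Nat.Prime.dvd_choose (Fact.out : p.Prime) (by omega) (by omega) (by omega)
    have : ((Nat.choose (2 * (k + d)) (k + d) : ℕ) : ZMod p) = 0 := by
      rw [ZMod.natCast_eq_zero_iff]; exact hdvd
    simp only [hF, this]
    ring
  -- termwise identity
  have hterm : ∀ k ∈ Finset.range (m - d + 1),
      -c k (m - d - k)
      = (-1 : ZMod p) ^ (m + 1) * (lam : ZMod p) ^ d * ((4 : ZMod p)⁻¹) ^ d * F k := by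
    intro k hk
    simp only [Finset.mem_range] at hk
    have hkd : d + k ≤ m := by omega
    have hcb1 : ((2 * k).choose k : ZMod p) = (-4) ^ k * (m.choose k : ZMod p) :=
      cb_cong p hodd k (by omega)
    have hcb2 : ((2 * (k + d)).choose (k + d) : ZMod p)
        = (-4) ^ (k + d) * (m.choose (k + d) : ZMod p) :=
      cb_cong p hodd (k + d) (by omega)
    have hj2 : m - d - k = m - (d + k) := by omega
    have hj1 : m - (m - (d + k)) = d + k := by omega
    have hsymm : m.choose (m - (d + k)) = m.choose (k + d) := by
      rw [Nat.choose_symm hkd, Nat.add_comm]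
    simp only [hc, hF, hj2, hj1, hsymm, hcb1, hcb2]
    have hsign : ((-1 : ZMod p)) ^ (k + m) * (-1) ^ ((m - (d + k)) + m) = (-1) ^ (m + d) := by
      rw [← pow_add]
      have h1 : (k + m) + ((m - (d + k)) + m) = (m + d) + 2 * (m - d) := by omega
      rw [h1, pow_add, pow_mul, neg_one_sq, one_pow, mul_one]
    have hsign2 : ((-4 : ZMod p)) ^ k * (-4) ^ (k + d) * ((4 : ZMod p)⁻¹) ^ d
        * ((16 : ZMod p)⁻¹) ^ k = (-1) ^ d := by
      have hm4 : (-4 : ZMod p) = -1 * 4 := by norm_num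
      rw [hm4, mul_pow, mul_pow]
      have s1 : (-1 : ZMod p) ^ k * (-1) ^ (k + d) = (-1) ^ d := by
        rw [← pow_add]
        have h1 : k + (k + d) = d + 2 * k := by omega
        rw [h1, pow_add, pow_mul, neg_one_sq, one_pow, mul_one]
      have s2 : (4 : ZMod p) ^ k * 4 ^ (k + d) * ((4 : ZMod p)⁻¹) ^ d
          * ((16 : ZMod p)⁻¹) ^ k = 1 := by
        have h44 : (4 : ZMod p) * 4 = 16 := by norm_num
        calc (4 : ZMod p) ^ k * 4 ^ (k + d) * ((4 : ZMod p)⁻¹) ^ d * ((16 : ZMod p)⁻¹) ^ k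
            = ((4 : ZMod p) * 4) ^ k * ((4 : ZMod p) * 4⁻¹) ^ d * ((16 : ZMod p)⁻¹) ^ k := by
              rw [mul_pow, mul_pow, pow_add]; ring
          _ = 1 := by
              rw [h44, mul_inv_cancel₀ h4z, one_pow, mul_one, ← mul_pow,
                mul_inv_cancel₀ h16z, one_pow]
      linear_combination ((4 : ZMod p) ^ k * 4 ^ (k + d) * ((4 : ZMod p)⁻¹) ^ d
          * ((16 : ZMod p)⁻¹) ^ k) * s1 + (-1 : ZMod p) ^ d * s2
    linear_combination (-(m.choose k : ZMod p) * (m.choose (k + d) : ZMod p)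
        * (lam : ZMod p) ^ (d + k)) * hsign
      + ((-1 : ZMod p) ^ m * (lam : ZMod p) ^ (d + k) * (m.choose k : ZMod p)
        * (m.choose (k + d) : ZMod p)) * hsign2
  -- final assembly
  have hp12 : (p + 1) / 2 = m + 1 := by omega
  rw [hA, hC2, hS1, hS2, hp12, htrunc]
  have hmain : (∑ i ∈ Finset.range (m - d + 1), -c i (m - d - i))
      = (-1 : ZMod p) ^ (m + 1) * (lam : ZMod p) ^ d * ((4 : ZMod p)⁻¹) ^ d *
        ∑ k ∈ Finset.range (m - d + 1), F k := by
    rw [Finset.mul_sum]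
    exact Finset.sum_congr rfl hterm
  rw [hmain]
  split_ifs <;> ring
end

section
/- Let p > 3 be a prime and let d ∈ {0,1,...,(p-1)/2}. Then Σ_{k=0}^{(p-1)/2} C(2k,k)·C(2k+2d,k+d)·16^{-k} ≡ 4^d · (-1/p) (mod p²), where (-1/p) is the Legendre symbol of -1 modulo p. -/
open Finset

namespace Stmt1

lemma prod_one_sub {R : Type*} [CommRing R] {P : R} (hP : P * P = 0)
    (s : Finset ℕ) (f : ℕ → R) :
    ∏ i ∈ s, (1 - P * f i) = 1 - P * ∑ i ∈ s, f i := by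
  classical
  induction s using Finset.induction_on with
  | empty => simp
  | @insert a s ha ih =>
      rw [Finset.prod_insert ha, ih, Finset.sum_insert ha]
      linear_combination (f a * ∑ i ∈ s, f i) * hP

lemma sum_double {R : Type*} [AddCommMonoid R] (n : ℕ) (f : ℕ → R) :
    ∑ k ∈ range (2*n), f k = ∑ i ∈ range n, (f (2*i) + f (2*i+1)) := by
  induction n with
  | zero => simp
  | succ n ih =>
      rw [show 2*(n+1) = (2*n+1)+1 by ring, sum_range_succ, sum_range_succ, ih,
        sum_range_succ]
      abel

lemma cen (k : ℕ) : (k+1) * Nat.choose (2*k+2) (k+1) = 2*(2*k+1) * Nat.choose (2*k) k := by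
  have h1 : Nat.choose (2*k+2) (k+1) = Nat.choose (2*k+1) k + Nat.choose (2*k+1) (k+1) := by
    have h := Nat.choose_succ_succ (2*k+1) k
    simp only [Nat.succ_eq_add_one] at h
    rw [show 2*k+1+1 = 2*k+2 by omega] at h
    omega
  have h2 : Nat.choose (2*k+1) k = Nat.choose (2*k+1) (k+1) := by
    have := Nat.choose_symm (show k ≤ 2*k+1 by omega)
    have e : 2*k+1-k = k+1 := by omega
    rw [e] at this
    omega
  have h3 := Nat.add_one_mul_choose_eq (2*k) k
  -- h3 : (2*k+1) * choose (2*k) k = choose (2*k+1) (k+1) * (k+1)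
  calc (k+1) * Nat.choose (2*k+2) (k+1) = 2*(Nat.choose (2*k+1) (k+1) * (k+1)) := by
        rw [h1, ← h2]; ring
    _ = 2*(2*k+1) * Nat.choose (2*k) k := by rw [← h3]; ring

lemma E1 (k j : ℕ) :
    16*(2*(j:ℤ)+1)*((k:ℤ)+1)*((Nat.choose (2*k) (k+j+1) : ℤ) - (Nat.choose (2*k) (k+j) : ℤ))
      + 8*((k:ℤ)+1-(j:ℤ))*(2*(k:ℤ)+1)*((Nat.choose (2*k+1) (k+j) : ℤ) + (Nat.choose (2*k+1) (k+j+1) : ℤ))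
    = 64*((k:ℤ)-(j:ℤ))*((k:ℤ)+1)*(Nat.choose (2*k) (k+j) : ℤ) := by
  rcases le_or_gt j k with h | h
  · have r1 : ((k:ℤ)+j+1) * (Nat.choose (2*k+1) (k+j+1) : ℤ)
        = (2*(k:ℤ)+1) * (Nat.choose (2*k) (k+j) : ℤ) := by
      have h3 := Nat.add_one_mul_choose_eq (2*k) (k+j)
      have := congrArg (Nat.cast : ℕ → ℤ) h3
      push_cast at this
      linarith
    have r2 : ((k:ℤ)+j+1) * (Nat.choose (2*k) (k+j+1) : ℤ)
        = ((k:ℤ)-j) * (Nat.choose (2*k) (k+j) : ℤ) := by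
      have h3 := Nat.choose_succ_right_eq (2*k) (k+j)
      have e : 2*k - (k+j) = k - j := by omega
      rw [e] at h3
      have := congrArg (Nat.cast : ℕ → ℤ) h3
      push_cast [Nat.cast_sub h] at this
      linarith
    have r3 : ((k:ℤ)+1-j) * (Nat.choose (2*k+1) (k+j) : ℤ)
        = ((k:ℤ)+j+1) * (Nat.choose (2*k+1) (k+j+1) : ℤ) := by
      have h3 := Nat.choose_succ_right_eq (2*k+1) (k+j)
      have e : 2*k+1 - (k+j) = k+1 - j := by omega
      rw [e] at h3
      have := congrArg (Nat.cast : ℕ → ℤ) h3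
      push_cast [Nat.cast_sub (show j ≤ k+1 by omega)] at this
      linarith
    have hne : ((k:ℤ)+j+1) ≠ 0 := by positivity
    apply mul_left_cancel₀ hne
    linear_combination (16*(2*(j:ℤ)+1)*((k:ℤ)+1)) * r2
      + (8*(2*(k:ℤ)+1)*((k:ℤ)+j+1)) * r3
      + (16*(2*(k:ℤ)+1)*((k:ℤ)+1)) * r1
  · have hB : Nat.choose (2*k) (k+j) = 0 := Nat.choose_eq_zero_of_lt (by omega)
    have hB' : Nat.choose (2*k) (k+j+1) = 0 := Nat.choose_eq_zero_of_lt (by omega)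
    have hD' : Nat.choose (2*k+1) (k+j+1) = 0 := Nat.choose_eq_zero_of_lt (by omega)
    rcases eq_or_lt_of_le (Nat.succ_le_of_lt h) with rfl | h2
    · rw [hB, hB', hD']
      push_cast
      ring
    · have hD : Nat.choose (2*k+1) (k+j) = 0 := Nat.choose_eq_zero_of_lt (by omega)
      rw [hB, hB', hD, hD']
      push_cast
      ring

/-- the key WZ-type identity over ℤ -/
lemma Ez (k j : ℕ) :
    16*(2*(j:ℤ)+1)*((k:ℤ)+1)*
        ((Nat.choose (2*k) k : ℤ) * (Nat.choose (2*k) (k+(j+1)) : ℤ)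
          - (Nat.choose (2*k) k : ℤ) * (Nat.choose (2*k) (k+j) : ℤ))
    = 64*((k:ℤ)-(j:ℤ))*((k:ℤ)+1)*((Nat.choose (2*k) k : ℤ) * (Nat.choose (2*k) (k+j) : ℤ))
      - 4*((k:ℤ)+1-(j:ℤ))*((k:ℤ)+1)*
        ((Nat.choose (2*(k+1)) (k+1) : ℤ) * (Nat.choose (2*(k+1)) ((k+1)+j) : ℤ)) := by
  have e1 := E1 k j
  have hc : ((k:ℤ)+1) * (Nat.choose (2*(k+1)) (k+1) : ℤ)
      = 2*(2*(k:ℤ)+1) * (Nat.choose (2*k) k : ℤ) := by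
    have := congrArg (Nat.cast : ℕ → ℤ) (cen k)
    push_cast at this
    rw [show 2*(k+1) = 2*k+2 by ring]
    linarith
  have hpas : (Nat.choose (2*(k+1)) ((k+1)+j) : ℤ)
      = (Nat.choose (2*k+1) (k+j) : ℤ) + (Nat.choose (2*k+1) (k+j+1) : ℤ) := by
    have h := Nat.choose_succ_succ (2*k+1) (k+j)
    simp only [Nat.succ_eq_add_one] at h
    rw [show 2*k+1+1 = 2*(k+1) by ring] at h
    nth_rewrite 1 [show k+j+1 = (k+1)+j by ring] at h
    exact_mod_cast h
  have e3 : k + (j+1) = k + j + 1 := by ring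
  rw [e3]
  linear_combination (Nat.choose (2*k) k : ℤ) * e1
    + (4*((k:ℤ)+1-j)*(Nat.choose (2*(k+1)) ((k+1)+j) : ℤ)) * hc
    + (8*((k:ℤ)+1-j)*(2*(k:ℤ)+1)*(Nat.choose (2*k) k : ℤ)) * hpas



section Modp

variable {p m : ℕ} (hp : p.Prime) (hm : p = 2*m+1)

lemma hpp : ((p:ZMod (p^2)) * (p:ZMod (p^2)) = 0) := by
  have : (((p^2 : ℕ)) : ZMod (p^2)) = 0 := ZMod.natCast_self _
  push_cast at this
  linear_combination this

lemma unit_lt (hp : p.Prime) {n : ℕ} (h0 : n ≠ 0) (h : n < p) :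
    IsUnit ((n : ℕ) : ZMod (p^2)) := by
  rw [ZMod.isUnit_iff_coprime]
  refine Nat.Coprime.pow_right _ (Nat.Coprime.symm ?_)
  exact (Nat.Prime.coprime_iff_not_dvd hp).2
    (fun hd => absurd (Nat.le_of_dvd (Nat.pos_of_ne_zero h0) hd) (not_le.2 h))

lemma unit16 (hp : p.Prime) (hodd : p ≠ 2) : IsUnit ((16 : ℕ) : ZMod (p^2)) := by
  rw [ZMod.isUnit_iff_coprime]
  refine Nat.Coprime.pow_right _ ?_
  have h2 : Nat.Coprime 2 p := (Nat.coprime_primes Nat.prime_two hp).mpr (Ne.symm hodd)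
  have := Nat.Coprime.pow_left 4 h2
  norm_num at this
  exact this

lemma hx16 (hp : p.Prime) (hodd : p ≠ 2) :
    (16 : ZMod (p^2)) * (16 : ZMod (p^2))⁻¹ = 1 := by
  have := unit16 hp hodd
  push_cast at this
  exact ZMod.mul_inv_of_unit _ this

lemma dvd_choose_pred (hp : p.Prime) :
    ∀ j, j < p → (p:ℤ) ∣ ((p-1).choose j : ℤ) - (-1)^j := by
  intro j
  induction j with
  | zero => simp
  | succ j ih =>
      intro hj
      have h1 : (p:ℤ) ∣ (p.choose (j+1) : ℤ) :=
        Int.natCast_dvd_natCast.2 (hp.dvd_choose_self (Nat.succ_ne_zero j) hj)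
      have h2 : (p.choose (j+1) : ℤ) = ((p-1).choose j : ℤ) + ((p-1).choose (j+1) : ℤ) := by
        have h := Nat.choose_succ_succ (p-1) j
        simp only [Nat.succ_eq_add_one] at h
        rw [show p-1+1 = p by omega] at h
        exact_mod_cast h
      have h3 := ih (by omega)
      have key : ((p-1).choose (j+1) : ℤ) - (-1)^(j+1)
          = ((p.choose (j+1) : ℤ)) - (((p-1).choose j : ℤ) - (-1)^j) := by
        rw [h2]; ring
      rw [key]
      exact dvd_sub h1 h3

lemma p_mul_choose_pred (hp : p.Prime) {j : ℕ} (hj : j < p) :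
    (p : ZMod (p^2)) * ((p-1).choose j : ZMod (p^2)) = (p : ZMod (p^2)) * (-1)^j := by
  obtain ⟨t, ht⟩ := dvd_choose_pred hp j hj
  have h2 : (((p-1).choose j : ℤ) : ZMod (p^2)) = (-1)^j + (p:ZMod (p^2)) * (t : ZMod (p^2)) := by
    have : ((p-1).choose j : ℤ) = (-1)^j + (p:ℤ)*t := by linarith
    rw [this]; push_cast; ring
  push_cast at h2
  rw [h2, mul_add, ← mul_assoc, hpp]
  ring

lemma pdvd_succ_choose (hp : p.Prime) {t : ℕ} (h0 : 2 ≤ t) (hlt : t < p) :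
    p ∣ (p+1).choose t := by
  obtain ⟨t', rfl⟩ : ∃ t', t = t'+1 := ⟨t-1, by omega⟩
  have h := Nat.choose_succ_succ p t'
  simp only [Nat.succ_eq_add_one] at h
  rw [h]
  exact dvd_add (hp.dvd_choose_self (by omega) (by omega))
    (hp.dvd_choose_self (by omega) (by omega))

lemma cast_zero_of_two_p_dvd {a b : ℕ} (ha : p ∣ a) (hb : p ∣ b) :
    ((a : ZMod (p^2)) * (b : ZMod (p^2)) = 0) := by
  obtain ⟨s, rfl⟩ := ha
  obtain ⟨t, rfl⟩ := hb
  push_cast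
  calc (p:ZMod (p^2)) * s * ((p:ZMod (p^2)) * t)
      = ((p:ZMod (p^2)) * (p:ZMod (p^2))) * (s*t) := by ring
    _ = 0 := by rw [hpp]; ring



/-- the truncated sum at d = 0 -/
def V (p m j : ℕ) : ZMod (p^2) :=
  ∑ k ∈ range (m+1),
    ((2*k).choose k : ZMod (p^2)) * ((2*k).choose (k+j) : ZMod (p^2)) * ((16 : ZMod (p^2))⁻¹)^k

lemma stepA {p m : ℕ} (hp : p.Prime) (hm : p = 2*m+1) (hm2 : 1 ≤ m) {j : ℕ} (hj : j < m) :
    V p m (j+1) = V p m j := by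
  set R := ZMod (p^2) with hR
  set x : R := (16 : R)⁻¹ with hxdef
  have hx : (16 : R) * x = 1 := hx16 hp (by omega)
  set g : ℕ → R := fun k =>
    4*((k:R)-(j:R)) * ((2*k).choose k : R) * ((2*k).choose (k+j) : R) * x^k with hg
  have key : ∀ k, k < m+1 →
      (2*(j:R)+1) * (((2*k).choose k : R) * ((2*k).choose (k+(j+1)) : R) * x^k)
        - (2*(j:R)+1) * (((2*k).choose k : R) * ((2*k).choose (k+j) : R) * x^k)
      = g k - g (k+1) := by
    intro k hk
    have ez := Ez k j
    have ezR := congrArg (Int.cast : ℤ → R) ez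
    push_cast [R] at ezR
    have hku : IsUnit ((k+1 : ℕ) : R) := unit_lt hp (by omega) (by omega)
    apply hku.mul_left_cancel
    push_cast
    simp only [hg]
    push_cast
    linear_combination (x^(k+1)) * ezR
      - (x^k*(((k:R)+1)*(2*(j:R)+1)*(((2*k).choose k : R) * ((2*k).choose (k+(j+1)) : R)
          - ((2*k).choose k : R) * ((2*k).choose (k+j) : R))
        - 4*((k:R)-(j:R))*((k:R)+1)*(((2*k).choose k : R) * ((2*k).choose (k+j) : R)))) * hx
  have sum_eq : (2*(j:R)+1) * V p m (j+1) - (2*(j:R)+1) * V p m j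
      = g 0 - g (m+1) := by
    rw [V, V, mul_sum, mul_sum, ← sum_sub_distrib, ← sum_range_sub' g (m+1)]
    exact sum_congr rfl (fun k hk => key k (mem_range.1 hk))
  have hg0 : g 0 = 0 := by
    rcases Nat.eq_zero_or_pos j with rfl | hj0
    · simp [hg]
    · have h0 : Nat.choose 0 j = 0 := Nat.choose_eq_zero_of_lt (by omega)
      simp [hg, h0]
  have hgm : g (m+1) = 0 := by
    have hd1 : p ∣ (2*(m+1)).choose (m+1) := by
      rw [show 2*(m+1) = p+1 by omega]
      exact pdvd_succ_choose hp (by omega) (by omega)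
    have hd2 : p ∣ (2*(m+1)).choose ((m+1)+j) := by
      rw [show 2*(m+1) = p+1 by omega]
      exact pdvd_succ_choose hp (by omega) (by omega)
    have h0 : ((2*(m+1)).choose (m+1) : R) * ((2*(m+1)).choose ((m+1)+j) : R) = 0 :=
      cast_zero_of_two_p_dvd hd1 hd2
    simp only [hg]
    calc 4*(((m+1:ℕ):R)-(j:R)) * ((2*(m+1)).choose (m+1) : R)
          * ((2*(m+1)).choose ((m+1)+j) : R) * x^(m+1)
        = 4*(((m+1:ℕ):R)-(j:R)) * (((2*(m+1)).choose (m+1) : R)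
          * ((2*(m+1)).choose ((m+1)+j) : R)) * x^(m+1) := by ring
      _ = 0 := by rw [h0]; ring
  rw [hg0, hgm, sub_zero] at sum_eq
  have hu : IsUnit ((2*j+1 : ℕ) : R) := unit_lt hp (by omega) (by omega)
  have hu' : IsUnit (2*(j:R)+1) := by push_cast [R] at hu; exact hu
  apply hu'.mul_left_cancel
  rw [sub_eq_zero] at sum_eq
  exact sum_eq


lemma prod_range_factorial (n : ℕ) : ∏ i ∈ range n, (i+1) = Nat.factorial n := by
  induction n with
  | zero => simp
  | succ n ih => rw [prod_range_succ, ih, Nat.factorial_succ, Nat.mul_comm]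

lemma morley {p m : ℕ} (hp : p.Prime) (hm : p = 2*m+1) (hm2 : 2 ≤ m) :
    ((2*m).choose m : ZMod (p^2)) = (-1)^m * 16^m := by
  set R := ZMod (p^2) with hRdef
  have hpp' : (p:R) * (p:R) = 0 := hpp
  have huinv : ∀ n : ℕ, n ≠ 0 → n < p → ((n:ℕ):R) * ((n:ℕ):R)⁻¹ = 1 := fun n h0 hlt =>
    ZMod.mul_inv_of_unit _ (unit_lt hp h0 hlt)
  set H : R := ∑ i ∈ range m, ((i+1 : ℕ) : R)⁻¹ with hH
  -- Part 1 : (2m choose m : R) = (-1)^m * (1 - p H)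
  have hfacnat : Nat.factorial (2*m) = Nat.factorial m * ∏ i ∈ range m, (p-(i+1)) := by
    have e1 : ∏ i ∈ Ico 1 (2*m+1), i = Nat.factorial (2*m) := Finset.prod_Ico_id_eq_factorial (2*m)
    have e2 : ∏ i ∈ Ico 1 (m+1), i = Nat.factorial m := Finset.prod_Ico_id_eq_factorial m
    have e3 : (∏ i ∈ Ico 1 (m+1), i) * ∏ i ∈ Ico (m+1) (2*m+1), i
        = ∏ i ∈ Ico 1 (2*m+1), i :=
      Finset.prod_Ico_consecutive _ (by omega) (by omega)
    have e4 : ∏ i ∈ Ico (m+1) (2*m+1), i = ∏ i ∈ range m, (m+1+i) := by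
      rw [Finset.prod_Ico_eq_prod_range, show 2*m+1 - (m+1) = m by omega]
    have e5 : ∏ i ∈ range m, (m+1+i) = ∏ i ∈ range m, (p-(i+1)) := by
      rw [← Finset.prod_range_reflect (fun i => p - (i+1)) m]
      refine Finset.prod_congr rfl (fun i hi => ?_)
      have := mem_range.1 hi
      omega
    rw [← e1, ← e3, e2, e4, e5]
  have hprodR : ((∏ i ∈ range m, (p-(i+1)) : ℕ) : R)
      = (-1)^m * (Nat.factorial m : R) * (1 - (p:R) * H) := by
    rw [Nat.cast_prod]
    have e6 : ∀ i ∈ range m, ((p-(i+1) : ℕ) : R)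
        = (-1) * (((i+1:ℕ):R) * (1 - (p:R)*(((i+1:ℕ)):R)⁻¹)) := by
      intro i hi
      have him := mem_range.1 hi
      have hle : i+1 ≤ p := by omega
      rw [Nat.cast_sub hle]
      have := huinv (i+1) (by omega) (by omega)
      calc (p:R) - ((i+1:ℕ):R)
          = (p:R) * 1 - ((i+1:ℕ):R) := by ring
        _ = (p:R) * (((i+1:ℕ):R) * ((i+1:ℕ):R)⁻¹) - ((i+1:ℕ):R) := by rw [this]
        _ = (-1) * (((i+1:ℕ):R) * (1 - (p:R)*(((i+1:ℕ)):R)⁻¹)) := by ring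
    rw [Finset.prod_congr rfl e6, Finset.prod_mul_distrib, Finset.prod_const,
      Finset.card_range, Finset.prod_mul_distrib,
      prod_one_sub hpp' (range m) (fun i => ((i+1:ℕ):R)⁻¹)]
    have e7 : ∏ i ∈ range m, ((i+1:ℕ):R) = (Nat.factorial m : R) := by
      calc ∏ i ∈ range m, ((i+1:ℕ):R) = ((∏ i ∈ range m, (i+1) : ℕ) : R) := by
            rw [Nat.cast_prod]
        _ = (Nat.factorial m : R) := by rw [prod_range_factorial m]
    rw [e7, ← hH]
    ring
  have hfu : IsUnit ((Nat.factorial m : ℕ) : R) := by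
    rw [ZMod.isUnit_iff_coprime]
    refine Nat.Coprime.pow_right _ (Nat.Coprime.symm ?_)
    refine (Nat.Prime.coprime_iff_not_dvd hp).2 (fun hd => ?_)
    have := (Nat.Prime.dvd_factorial hp).1 hd
    omega
  have hchoose1 : ((2*m).choose m : R) = (-1)^m * (1 - (p:R) * H) := by
    have hc := Nat.choose_mul_factorial_mul_factorial (show m ≤ 2*m by omega)
    rw [show 2*m - m = m by omega] at hc
    have hcast := congrArg (Nat.cast : ℕ → R) hc
    push_cast [R] at hcast
    have hfac1 : (Nat.factorial (2*m) : R) = ((-1)^m * (1 - (p:R) * H)) * (Nat.factorial m : R) * (Nat.factorial m : R) := by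
      have := congrArg (Nat.cast : ℕ → R) hfacnat
      push_cast [R] at this
      rw [this]
      have := hprodR
      push_cast [R] at this
      rw [this]
      ring
    apply hfu.mul_right_cancel
    apply hfu.mul_right_cancel
    push_cast [R]
    calc ((2*m).choose m : R) * (Nat.factorial m : R) * (Nat.factorial m : R) = (Nat.factorial (2*m) : R) := by
          rw [← hcast]
      _ = ((-1)^m * (1 - (p:R) * H)) * (Nat.factorial m : R) * (Nat.factorial m : R) := hfac1
  -- Part 2 : 2^p = p * A + 2
  set A : R := ∑ i ∈ range (2*m), (-1)^i * ((i+1:ℕ):R)⁻¹ with hA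
  have h2p : (2:R)^p = (p:R) * A + 2 := by
    have h := Nat.sum_range_choose p
    rw [show p+1 = (2*m)+1+1 by omega, sum_range_succ, sum_range_succ'] at h
    rw [Nat.choose_zero_right, show 2*m+1 = p by omega, Nat.choose_self] at h
    have hcast := congrArg (Nat.cast : ℕ → R) h
    push_cast [R] at hcast
    have hterm : ∀ i ∈ range (2*m), (p.choose (i+1) : R)
        = (p:R) * ((-1)^i * ((i+1:ℕ):R)⁻¹) := by
      intro i hi
      have him := mem_range.1 hi
      have hnat := Nat.add_one_mul_choose_eq (p-1) i
      rw [show p-1+1 = p by omega] at hnat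
      have hcast2 := congrArg (Nat.cast : ℕ → R) hnat
      push_cast [R] at hcast2
      -- hcast2 : p * ((p-1).choose i) = p.choose (i+1) * (i+1)
      have hmod := p_mul_choose_pred hp (j := i) (by omega)
      have hkey : (p.choose (i+1) : R) * ((i+1:ℕ):R) = (p:R) * (-1)^i := by
        push_cast [R]
        rw [← hcast2]
        push_cast [R] at hmod
        exact hmod
      have hiu := huinv (i+1) (by omega) (by omega)
      calc (p.choose (i+1) : R)
          = (p.choose (i+1) : R) * (((i+1:ℕ):R) * ((i+1:ℕ):R)⁻¹) := by rw [hiu]; ring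
        _ = ((p.choose (i+1) : R) * ((i+1:ℕ):R)) * ((i+1:ℕ):R)⁻¹ := by ring
        _ = ((p:R) * (-1)^i) * ((i+1:ℕ):R)⁻¹ := by rw [hkey]
        _ = (p:R) * ((-1)^i * ((i+1:ℕ):R)⁻¹) := by ring
    rw [Finset.sum_congr rfl hterm, ← Finset.mul_sum] at hcast
    rw [← hcast, hA]
    push_cast [R]
    ring
  -- Part 3 : p * H2 = 0
  set H2 : R := ∑ k ∈ range (2*m), ((k+1:ℕ):R)⁻¹ with hH2
  have pairterm : ∀ a b : ℕ, a ≠ 0 → b ≠ 0 → a + b = p →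
      (p:R)*((a:ℕ):R)⁻¹ + (p:R)*((b:ℕ):R)⁻¹ = 0 := by
    intro a b ha hb hab
    have hua : IsUnit ((a:ℕ):R) := unit_lt hp ha (by omega)
    have hub : IsUnit ((b:ℕ):R) := unit_lt hp hb (by omega)
    apply (hua.mul hub).mul_left_cancel
    calc ((a:ℕ):R)*((b:ℕ):R) * ((p:R)*((a:ℕ):R)⁻¹ + (p:R)*((b:ℕ):R)⁻¹)
        = (p:R)*((b:ℕ):R)*(((a:ℕ):R)*((a:ℕ):R)⁻¹)
          + (p:R)*((a:ℕ):R)*(((b:ℕ):R)*((b:ℕ):R)⁻¹) := by ring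
      _ = (p:R)*((b:ℕ):R) + (p:R)*((a:ℕ):R) := by
          rw [huinv a ha (by omega), huinv b hb (by omega)]; ring
      _ = (p:R)*(((a+b:ℕ)):R) := by push_cast; ring
      _ = 0 := by rw [hab]; exact hpp'
      _ = ((a:ℕ):R)*((b:ℕ):R) * 0 := by ring
  have hpH2 : (p:R) * H2 = 0 := by
    have hrefl := Finset.sum_range_reflect (fun k => (p:R)*((k+1:ℕ):R)⁻¹) (2*m)
    have h2 : (2:R) * ((p:R) * H2) = 0 := by
      have hexp : (p:R) * H2 = ∑ k ∈ range (2*m), (p:R)*((k+1:ℕ):R)⁻¹ := by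
        rw [hH2, Finset.mul_sum]
      calc (2:R) * ((p:R) * H2)
          = (∑ k ∈ range (2*m), (p:R)*((k+1:ℕ):R)⁻¹)
            + ∑ k ∈ range (2*m), (p:R)*((2*m-1-k+1:ℕ):R)⁻¹ := by
            rw [hrefl, hexp]; ring
        _ = ∑ k ∈ range (2*m), ((p:R)*((k+1:ℕ):R)⁻¹ + (p:R)*((2*m-1-k+1:ℕ):R)⁻¹) := by
            rw [← Finset.sum_add_distrib]
        _ = 0 := by
            rw [Finset.sum_eq_zero]
            intro k hk
            have hkm := mem_range.1 hk
            rw [show 2*m-1-k+1 = 2*m-k by omega]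
            exact pairterm (k+1) (2*m-k) (by omega) (by omega) (by omega)
    have hu2 : IsUnit ((2:ℕ):R) := unit_lt hp (by omega) (by omega)
    have hu2' : IsUnit (2:R) := by push_cast at hu2; exact hu2
    apply hu2'.mul_left_cancel
    rw [h2]; ring
  -- Part 4 : H2 - A = H
  have hH2A : H2 - A = H := by
    rw [hH2, hA, sum_double (f := fun k => ((k+1:ℕ):R)⁻¹),
      sum_double (f := fun k => (-1)^k * ((k+1:ℕ):R)⁻¹), ← Finset.sum_sub_distrib, hH]
    refine Finset.sum_congr rfl (fun i hi => ?_)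
    have him := mem_range.1 hi
    have hpow1 : ((-1:R))^(2*i) = 1 := by rw [pow_mul]; norm_num
    have hpow2 : ((-1:R))^(2*i+1) = -1 := by rw [pow_succ, hpow1]; norm_num
    rw [hpow1, hpow2]
    have hud : 2 * ((2*i+1+1:ℕ):R)⁻¹ = ((i+1:ℕ):R)⁻¹ := by
      have hu := unit_lt hp (n := 2*i+2) (by omega) (by omega)
      have heq : ((2*i+1+1 : ℕ):R) = ((2*i+2 : ℕ):R) := by push_cast; ring
      rw [heq]
      apply hu.mul_left_cancel
      calc ((2*i+2:ℕ):R) * (2 * ((2*i+2:ℕ):R)⁻¹)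
          = 2 * (((2*i+2:ℕ):R) * ((2*i+2:ℕ):R)⁻¹) := by ring
        _ = 2 := by rw [huinv (2*i+2) (by omega) (by omega)]; ring
        _ = 2 * (((i+1:ℕ):R) * ((i+1:ℕ):R)⁻¹) := by
            rw [huinv (i+1) (by omega) (by omega)]; ring
        _ = ((2*i+2:ℕ):R) * ((i+1:ℕ):R)⁻¹ := by push_cast [R]; ring
    linear_combination hud
  -- Part 5 : conclude
  have hpA : (p:R) * A = -((p:R) * H) := by
    have : (p:R) * (H2 - A) = (p:R) * H := by rw [hH2A]
    rw [mul_sub, hpH2] at this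
    linear_combination - this
  have h2t : (2:R) * ((2:R)^(2*m)) = 2 - (p:R)*H := by
    have h1 : (2:R)^p = 2 - (p:R)*H := by rw [h2p, hpA]; ring
    have h2 : (2:R)^p = (2:R)^(2*m+1) := congrArg (fun n => (2:R)^n) hm
    have h3 : (2:R)^(2*m+1) = (2:R)^(2*m)*2 := pow_succ 2 (2*m)
    linear_combination h1 - h2 - h3
  have h16 : (16:R)^m = 1 - (p:R)*H := by
    have ht : (16:R)^m = (2:R)^(2*m) * (2:R)^(2*m) := by
      rw [show (16:R) = 2^4 by norm_num, ← pow_mul, show 4*m = 2*m+2*m by ring, pow_add]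
    have hu4 : IsUnit ((4:ℕ):R) := unit_lt hp (by omega) (by omega)
    have hu4' : IsUnit (4:R) := by push_cast at hu4; exact hu4
    apply hu4'.mul_left_cancel
    rw [ht]
    linear_combination ((2:R)*((2:R)^(2*m)) + 2 - (p:R)*H) * h2t + (H*H)*hpp'
  rw [hchoose1, h16]


lemma chainA {p m : ℕ} (hp : p.Prime) (hm : p = 2*m+1) (hm2 : 1 ≤ m) :
    ∀ i j, j + i = m → V p m j = V p m m := by
  intro i
  induction i with
  | zero => intro j h; rw [show j = m by omega]
  | succ i ih =>
      intro j h
      calc V p m j = V p m (j+1) := (stepA hp hm hm2 (by omega)).symm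
        _ = V p m m := ih (j+1) (by omega)

lemma Vm_eval {p m : ℕ} :
    V p m m = ((2*m).choose m : ZMod (p^2)) * ((16 : ZMod (p^2))⁻¹)^m := by
  rw [V, Finset.sum_eq_single_of_mem m (self_mem_range_succ m)]
  · rw [show m + m = 2*m by ring, Nat.choose_self, Nat.cast_one]
    ring
  · intro k hk hne
    have hkm : k < m := by
      have := mem_range.1 hk
      omega
    have h0 : (2*k).choose (k+m) = 0 := Nat.choose_eq_zero_of_lt (by omega)
    rw [h0, Nat.cast_zero]
    ring

lemma pascal0 (n : ℕ) :
    (2*n+2).choose (n+1) = 2*((2*n).choose n) + 2*((2*n).choose (n+1)) := by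
  have h1 := Nat.choose_succ_succ (2*n+1) n
  simp only [Nat.succ_eq_add_one] at h1
  rw [show 2*n+1+1 = 2*n+2 by omega] at h1
  have h2 : (2*n+1).choose n = (2*n+1).choose (n+1) := by
    have h := Nat.choose_symm (show n ≤ 2*n+1 by omega)
    rw [show 2*n+1-n = n+1 by omega] at h
    omega
  have h3 := Nat.choose_succ_succ (2*n) n
  simp only [Nat.succ_eq_add_one] at h3
  omega

lemma pascal2 (n t : ℕ) :
    (2*n+2).choose (n+t+2)
      = (2*n).choose (n+t) + 2*((2*n).choose (n+t+1)) + (2*n).choose (n+t+2) := by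
  have h1 := Nat.choose_succ_succ (2*n+1) (n+t+1)
  simp only [Nat.succ_eq_add_one] at h1
  rw [show 2*n+1+1 = 2*n+2 by omega, show n+t+1+1 = n+t+2 by omega] at h1
  have h2 := Nat.choose_succ_succ (2*n) (n+t)
  have h3 := Nat.choose_succ_succ (2*n) (n+t+1)
  simp only [Nat.succ_eq_add_one] at h2 h3
  rw [show n+t+1+1 = n+t+2 by omega] at h3
  omega

/-- general truncated sum -/
def W (p m d j : ℕ) : ZMod (p^2) :=
  ∑ k ∈ range (m+1),
    ((2*k).choose k : ZMod (p^2)) * ((2*k+2*d).choose (k+d+j) : ZMod (p^2))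
      * ((16 : ZMod (p^2))⁻¹)^k

lemma stepB {p m : ℕ} (hp : p.Prime) (hm : p = 2*m+1) (hm2 : 2 ≤ m) :
    ∀ d j, d + j ≤ m →
      W p m d j = 4^d * ((2*m).choose m : ZMod (p^2)) * ((16 : ZMod (p^2))⁻¹)^m := by
  intro d
  induction d with
  | zero =>
      intro j hj
      have hW0 : W p m 0 j = V p m j := by
        rw [W, V]
        refine sum_congr rfl (fun k hk => ?_)
        rw [show 2*k+2*0 = 2*k by ring, show k+0+j = k+j by ring]
      rw [hW0, chainA hp hm (by omega) (m-j) j (by omega), Vm_eval]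
      ring
  | succ d ih =>
      intro j hj
      rcases j with _ | j'
      · have hW : W p m (d+1) 0 = 2 * W p m d 0 + 2 * W p m d 1 := by
          rw [W, W, W, mul_sum, mul_sum, ← sum_add_distrib]
          refine sum_congr rfl (fun k hk => ?_)
          have hn := pascal0 (k+d)
          rw [show 2*k+2*(d+1) = 2*(k+d)+2 by ring, show k+(d+1)+0 = (k+d)+1 by ring, hn]
          push_cast
          rw [show 2*(k+d) = 2*k+2*d by ring, show k+d+1 = k+d+1 by ring]
          rw [show (((2*k+2*d).choose (k+d) : ℕ) : ZMod (p^2))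
              = (((2*k+2*d).choose (k+d+0) : ℕ) : ZMod (p^2)) by rw [show k+d+0 = k+d by ring]]
          ring
        rw [hW, ih 0 (by omega), ih 1 (by omega)]
        ring
      · have hW : W p m (d+1) (j'+1)
            = W p m d j' + 2 * W p m d (j'+1) + W p m d (j'+2) := by
          rw [W, W, W, W, mul_sum, ← sum_add_distrib, ← sum_add_distrib]
          refine sum_congr rfl (fun k hk => ?_)
          have hn := pascal2 (k+d) j'
          rw [show 2*k+2*(d+1) = 2*(k+d)+2 by ring,
            show k+(d+1)+(j'+1) = (k+d)+j'+2 by ring, hn]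
          push_cast
          rw [show 2*(k+d) = 2*k+2*d by ring,
            show k+d+j'+1 = k+d+(j'+1) by ring,
            show k+d+j'+2 = k+d+(j'+2) by ring]
          ring
        rw [hW, ih j' (by omega), ih (j'+1) (by omega), ih (j'+2) (by omega)]
        ring

end Modp

end Stmt1

/-- Theorem 1.2, congruence (1.3): for a prime `p > 3` and `d ∈ {0, ..., (p-1)/2}`,
`∑_{k=0}^{(p-1)/2} C(2k,k) C(2k+2d,k+d) / 16^k ≡ 4^d (-1/p) (mod p²)`. -/
theorem stmt_1 (p : ℕ) (hp : p.Prime) (hp3 : 3 < p) (d : ℕ) (hd : d ≤ (p - 1) / 2) :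
    (∑ k ∈ Finset.range ((p - 1) / 2 + 1),
        (Nat.choose (2 * k) k : ZMod (p ^ 2)) *
          (Nat.choose (2 * k + 2 * d) (k + d) : ZMod (p ^ 2)) *
            ((16 : ZMod (p ^ 2))⁻¹) ^ k) =
      (4 : ZMod (p ^ 2)) ^ d * ((jacobiSym (-1) p : ℤ) : ZMod (p ^ 2)) := by
  obtain ⟨m, hm⟩ : ∃ m, p = 2*m+1 := by
    obtain ⟨t, ht⟩ := hp.odd_of_ne_two (by omega)
    exact ⟨t, ht⟩
  have hm2 : 2 ≤ m := by omega
  have hhalf : (p - 1) / 2 = m := by omega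
  rw [hhalf] at hd ⊢
  have hsum : (∑ k ∈ Finset.range (m + 1),
      (Nat.choose (2 * k) k : ZMod (p ^ 2)) *
        (Nat.choose (2 * k + 2 * d) (k + d) : ZMod (p ^ 2)) *
          ((16 : ZMod (p ^ 2))⁻¹) ^ k) = Stmt1.W p m d 0 := by
    rw [Stmt1.W]
    exact Finset.sum_congr rfl (fun k hk => by rw [show k + d + 0 = k + d by ring])
  rw [hsum, Stmt1.stepB hp hm hm2 d 0 (by omega), Stmt1.morley hp hm hm2]
  have hx : (16 : ZMod (p^2)) * (16 : ZMod (p^2))⁻¹ = 1 := Stmt1.hx16 hp (by omega)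
  have h16x : ((16 : ZMod (p^2))^m) * ((16 : ZMod (p^2))⁻¹)^m = 1 := by
    rw [← mul_pow, hx, one_pow]
  have hj : ((jacobiSym (-1) p : ℤ) : ZMod (p^2)) = (-1)^m := by
    have h1 : jacobiSym (-1) p = ZMod.χ₄ p := jacobiSym.at_neg_one ⟨m, by omega⟩
    have h2 : ZMod.χ₄ (p : ℕ) = (-1)^(p/2) := ZMod.χ₄_eq_neg_one_pow (by omega)
    rw [h1, h2, show p/2 = m by omega]
    push_cast
    ring
  rw [hj]
  calc (4 : ZMod (p^2))^d * ((-1)^m * 16^m) * (16⁻¹)^m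
      = 4^d * (-1)^m * (16^m * (16⁻¹)^m) := by ring
    _ = 4^d * (-1)^m := by rw [h16x]; ring
end

section
/- Let p be a prime with p ≡ 3 (mod 4). Then the following five quantities are all congruent modulo p: Σ_{k=0}^{(p-1)/2} C(2k,k)·C_k·8^{-k}; −2·Σ_{k=0}^{(p-1)/2} k·C(2k,k)²·8^{-k}; −(1/2)·Σ_{k=0}^{(p-1)/2} C(2k,k)·C_k·(−16)^{-k}; 4·Σ_{k=0}^{(p-1)/2} k·C(2k,k)²·(−16)^{-k}; and ((-1)^{(p+1)/4}/2)·C((p+1)/2,(p+1)/4). -/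
open Polynomial Finset

/- ===== Polynomial coefficient lemmas ===== -/

lemma coeff_one_sub_X_pow (n k : ℕ) :
    ((1 - X : Polynomial ℤ) ^ n).coeff k = (-1)^k * n.choose k := by
  rcases le_or_gt k n with h | h
  · obtain ⟨m, rfl⟩ : ∃ m, n = k + m := ⟨n - k, (Nat.add_sub_cancel' h).symm⟩
    have h1 : (1 - X : Polynomial ℤ) ^ (k+m) = (X + C (-1))^(k+m) * C ((-1)^(k+m)) := by
      rw [map_pow, ← mul_pow]; ring_nf; rw [map_neg, map_one]; ring
    have h2 : ((-1:ℤ))^m * ((-1))^m = 1 := by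
      rw [← pow_add, ← two_mul, pow_mul]; norm_num
    rw [h1, coeff_mul_C, coeff_X_add_C_pow, Nat.add_sub_cancel_left, pow_add]
    linear_combination ((-1:ℤ)^k * ((k + m).choose k)) * h2
  · rw [Polynomial.coeff_eq_zero_of_natDegree_lt, Nat.choose_eq_zero_of_lt h]
    · ring
    · calc ((1 - X:Polynomial ℤ)^n).natDegree ≤ n * (1 - X:Polynomial ℤ).natDegree :=
            Polynomial.natDegree_pow_le
        _ ≤ n * 1 := by
            apply Nat.mul_le_mul_left
            apply le_trans (Polynomial.natDegree_sub_le _ _)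
            simp
        _ < k := by omega

lemma coeff_one_sub_X_sq_pow (n k : ℕ) :
    ((1 - X^2 : Polynomial ℤ) ^ n).coeff k
      = if 2 ∣ k then ((-1:ℤ))^(k/2) * (n.choose (k/2) : ℤ) else 0 := by
  have h : (1 - X^2 : Polynomial ℤ)^n = Polynomial.expand ℤ 2 ((1 - X)^n) := by
    rw [map_pow, map_sub, map_one, Polynomial.expand_X]
  rw [h, Polynomial.coeff_expand (by norm_num : 0 < 2)]
  split <;> simp [coeff_one_sub_X_pow]

/-- Alternating Vandermonde evaluation. -/
lemma AV1 (a : ℕ) :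
    ∑ i ∈ Finset.range (a+1), (-1:ℤ)^i * a.choose i * (a+1).choose (i+1)
      = (-1)^(a/2) * a.choose (a/2) := by
  have key : ((1 - X : Polynomial ℤ)^a * (1+X)^(a+1)).coeff a
      = ∑ i ∈ Finset.range (a+1), (-1:ℤ)^i * a.choose i * (a+1).choose (i+1) := by
    rw [Polynomial.coeff_mul, Finset.Nat.sum_antidiagonal_eq_sum_range_succ_mk]
    refine Finset.sum_congr rfl fun i hi => ?_
    simp only [Finset.mem_range] at hi
    rw [coeff_one_sub_X_pow, Polynomial.coeff_one_add_X_pow]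
    rw [show a - i = (a+1) - (i+1) by omega, Nat.choose_symm (by omega)]
  have key2 : (1 - X : Polynomial ℤ)^a * (1+X)^(a+1) = (1 - X^2)^a * (1+X) := by
    rw [pow_succ, ← mul_assoc, ← mul_pow]; ring_nf
  rw [← key, key2]
  rcases Nat.even_or_odd a with ⟨b, hb⟩ | ⟨b, hb⟩
  · subst hb
    rcases Nat.eq_zero_or_pos b with rfl | hbpos
    · simp
    · have hidx : b + b = (b + b - 1) + 1 := by omega
      rw [mul_add, mul_one, Polynomial.coeff_add, hidx, Polynomial.coeff_mul_X,
        coeff_one_sub_X_sq_pow, coeff_one_sub_X_sq_pow]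
      have h1 : ¬ (2 ∣ b + b - 1) := by omega
      have h2 : (2:ℕ) ∣ ((b+b-1)+1) := by omega
      rw [if_neg h1, if_pos h2]
      have : ((b+b-1)+1)/2 = b := by omega
      rw [this]; ring
  · subst hb
    rw [mul_add, mul_one, Polynomial.coeff_add, Polynomial.coeff_mul_X,
      coeff_one_sub_X_sq_pow, coeff_one_sub_X_sq_pow]
    have h1 : ¬ (2 ∣ 2*b + 1) := by omega
    rw [if_neg h1, if_pos ⟨b, rfl⟩]
    have : (2*b)/2 = b := by omega
    rw [this, show (2*b+1)/2 = b by omega]; ring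

/- ===== Nat Vandermonde lemmas ===== -/

/-- ∑_k C(n,k)^2 C(k,j) = C(n,j) C(2n-j, n-j) for j ≤ n. -/
lemma nat_V1 (n j : ℕ) (hj : j ≤ n) :
    ∑ k ∈ Finset.range (n+1), n.choose k * n.choose k * k.choose j
      = n.choose j * (2*n - j).choose (n - j) := by
  have h1 : ∑ k ∈ Finset.range (n+1), n.choose k * n.choose k * k.choose j
      = ∑ k ∈ Finset.Ico j (n+1), n.choose k * n.choose k * k.choose j := by
    symm
    apply Finset.sum_subset
    · intro x hx; simp only [Finset.mem_Ico] at hx; simp [Finset.mem_range]; omega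
    · intro x hx hx2
      simp only [Finset.mem_range] at hx
      simp only [Finset.mem_Ico, not_and, not_le] at hx2
      have : x < j := by omega
      rw [Nat.choose_eq_zero_of_lt this, Nat.mul_zero]
  rw [h1, Finset.sum_Ico_eq_sum_range]
  have h2 : ∀ i ∈ Finset.range (n+1-j), n.choose (j+i) * n.choose (j+i) * (j+i).choose j
      = n.choose j * (n.choose (j+i) * (n-j).choose i) := by
    intro i hi
    simp only [Finset.mem_range] at hi
    have hkn : j + i ≤ n := by omega
    have := Nat.choose_mul (n := n) (Nat.le_add_right j i)
    rw [show j + i - j = i by omega] at this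
    calc n.choose (j+i) * n.choose (j+i) * (j+i).choose j
        = n.choose (j+i) * (n.choose (j+i) * (j+i).choose j) := by ring
      _ = n.choose (j+i) * (n.choose j * (n-j).choose i) := by rw [this]
      _ = n.choose j * (n.choose (j+i) * (n-j).choose i) := by ring
  rw [Finset.sum_congr rfl h2, ← Finset.mul_sum]
  congr 1
  have hV := Nat.add_choose_eq n (n-j) (n-j)
  rw [Finset.Nat.sum_antidiagonal_eq_sum_range_succ_mk] at hV
  rw [show 2*n - j = n + (n - j) by omega, hV]
  rw [← Finset.sum_range_reflect]
  apply Finset.sum_congr (by congr 1; omega)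
  intro i hi
  simp only [Finset.mem_range, Nat.succ_eq_add_one] at hi
  rw [show n + 1 - j - 1 - i = n - j - i by omega]
  rw [show j + (n - j - i) = n - i by omega]
  rw [show n.choose (n - i) = n.choose i from Nat.choose_symm (by omega)]

/-- ∑_k C(n,k) C(n+1,k+1) = C(2n+1, n). -/
lemma nat_V2 (n : ℕ) :
    ∑ k ∈ Finset.range (n+1), n.choose k * (n+1).choose (k+1) = (2*n+1).choose n := by
  have hV := Nat.add_choose_eq n (n+1) n
  rw [Finset.Nat.sum_antidiagonal_eq_sum_range_succ_mk] at hV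
  rw [show 2*n+1 = n + (n+1) by omega, hV]
  apply Finset.sum_congr rfl
  intro k hk
  simp only [Finset.mem_range] at hk
  congr 1
  rw [← Nat.choose_symm (by omega : k + 1 ≤ n + 1)]
  congr 1; omega

/- ===== ZMod lemmas ===== -/

lemma zmod_unit {p : ℕ} (k : ℕ) (h1 : k ≠ 0) (h2 : k < p) : ((k:ℕ) : ZMod p) ≠ 0 := by
  rw [Ne, ZMod.natCast_eq_zero_iff]
  intro hdvd
  have := Nat.le_of_dvd (by omega) hdvd
  omega

/-- `C(p-1-j, i) ≡ (-1)^i C(i+j,i) (mod p)` for `i+j ≤ p-1`. -/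
lemma choose_pred_cast {p : ℕ} (hp : p.Prime) :
    ∀ i j : ℕ, i + j ≤ p - 1 →
      (((p-1-j).choose i : ℕ) : ZMod p) = (-1)^i * (((i+j).choose i : ℕ) : ZMod p) := by
  haveI := Fact.mk hp
  have hp2 := hp.two_le
  intro i
  induction i with
  | zero => intro j h; simp
  | succ i ih =>
    intro j h
    have hIH := ih j (by omega)
    have hnat := Nat.choose_succ_right_eq (p-1-j) i
    have hcast : (((p-1-j).choose (i+1) : ℕ) : ZMod p) * ((i+1 : ℕ) : ZMod p)
        = (((p-1-j).choose i : ℕ) : ZMod p) * ((p-1-j-i : ℕ) : ZMod p) := by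
      exact_mod_cast congrArg (Nat.cast : ℕ → ZMod p) hnat
    have hsub : ((p-1-j-i : ℕ) : ZMod p) = -((i+j+1 : ℕ) : ZMod p) := by
      rw [show p-1-j-i = p - (i+j+1) by omega, Nat.cast_sub (by omega), ZMod.natCast_self]
      ring
    have hnat2 := Nat.add_one_mul_choose_eq (i+j) i
    have hcast2 : ((i+j+1 : ℕ) : ZMod p) * (((i+j).choose i : ℕ) : ZMod p)
        = (((i+j+1).choose (i+1) : ℕ) : ZMod p) * ((i+1 : ℕ) : ZMod p) := by
      exact_mod_cast congrArg (Nat.cast : ℕ → ZMod p) hnat2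
    have hu : ((i+1 : ℕ) : ZMod p) ≠ 0 := zmod_unit (i+1) (by omega) (by omega)
    apply mul_right_cancel₀ hu
    rw [hcast, hIH, hsub]
    rw [show i+1+j = i+j+1 by omega]
    calc (-1:ZMod p)^i * ((i+j).choose i : ℕ) * -((i+j+1:ℕ) : ZMod p)
        = (-(-1:ZMod p)^i) * (((i+j+1 : ℕ) : ZMod p) * (((i+j).choose i : ℕ) : ZMod p)) := by ring
      _ = (-(-1:ZMod p)^i) * ((((i+j+1).choose (i+1) : ℕ) : ZMod p) * ((i+1 : ℕ) : ZMod p)) := by rw [hcast2]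
      _ = (-1)^(i+1) * (((i+j+1).choose (i+1) : ℕ) : ZMod p) * ((i+1 : ℕ) : ZMod p) := by
          rw [pow_succ]; ring

/-- central binomial coefficient mod p in terms of `C((p-1)/2, k)` -/
lemma cb_cast {p : ℕ} (hp : p.Prime) (n : ℕ) (hn : 2*n+1 = p) :
    ∀ k, k ≤ n → (((2*k).choose k : ℕ) : ZMod p) = (n.choose k : ZMod p) * (-4)^k := by
  haveI := Fact.mk hp
  have h2n1 : (2 : ZMod p) * (n : ZMod p) + 1 = 0 := by
    have : ((2*n+1 : ℕ) : ZMod p) = 0 := by rw [hn]; exact ZMod.natCast_self p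
    push_cast at this
    linear_combination this
  intro k
  induction k with
  | zero => intro _; simp
  | succ k ih =>
    intro hk
    have hIH := ih (by omega)
    have hnat := Nat.succ_mul_centralBinom_succ k
    rw [Nat.centralBinom_eq_two_mul_choose, Nat.centralBinom_eq_two_mul_choose] at hnat
    have hcast : ((k+1:ℕ) : ZMod p) * (((2*(k+1)).choose (k+1) : ℕ) : ZMod p)
        = ((2*(2*k+1) : ℕ) : ZMod p) * (((2*k).choose k : ℕ) : ZMod p) := by
      exact_mod_cast congrArg (Nat.cast : ℕ → ZMod p) hnat
    have hnat2 := Nat.choose_succ_right_eq n k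
    have hcast2 : ((n.choose (k+1) : ℕ) : ZMod p) * ((k+1:ℕ) : ZMod p)
        = ((n.choose k : ℕ) : ZMod p) * ((n - k : ℕ) : ZMod p) := by
      exact_mod_cast congrArg (Nat.cast : ℕ → ZMod p) hnat2
    have hsub : ((n - k : ℕ) : ZMod p) = (n : ZMod p) - (k : ZMod p) :=
      Nat.cast_sub (by omega)
    have hu : ((k+1 : ℕ) : ZMod p) ≠ 0 := zmod_unit (k+1) (by omega) (by omega)
    apply mul_left_cancel₀ hu
    rw [hcast, hIH]
    have : ((k+1:ℕ):ZMod p) * ((n.choose (k+1) : ZMod p) * (-4)^(k+1))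
        = ((n.choose k : ZMod p) * ((n:ZMod p) - (k:ZMod p))) * (-4)^(k+1) := by
      rw [← hsub, ← hcast2]; push_cast; ring
    rw [this]
    have hgoal : ((n:ZMod p) - (k:ZMod p)) * (-4) = 2*(2*(k:ZMod p)+1) := by
      linear_combination (-2 : ZMod p) * h2n1
    push_cast
    linear_combination ((n.choose k : ZMod p) * (-4:ZMod p)^k) * hgoal + (4*(n.choose k : ZMod p)*(-4:ZMod p)^k) * h2n1

noncomputable def Saux (p n : ℕ) (x : ZMod p) : ZMod p :=
  ∑ k ∈ Finset.range (n+1), (n.choose k : ZMod p)^2 * x^k * ((k : ZMod p)+1)⁻¹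

noncomputable def Taux (p n : ℕ) (x : ZMod p) : ZMod p :=
  ∑ k ∈ Finset.range (n+1), (k : ZMod p) * (n.choose k : ZMod p)^2 * x^k

/-- Key kernel identity: `∑_k C(n,k)² C(k,j) ≡ -(-1)^j C(n,j)² (mod p)`. -/
lemma K0 {p : ℕ} (hp : p.Prime) (n : ℕ) (hn : 2*n+1 = p) (hodd : n % 2 = 1)
    (j : ℕ) (hj : j ≤ n+1) :
    ∑ k ∈ Finset.range (n+1), (n.choose k : ZMod p)^2 * (k.choose j : ZMod p)
      = -(-1)^j * (n.choose j : ZMod p)^2 := by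
  rcases Nat.lt_or_ge j (n+1) with hjn | hjn
  · have hj' : j ≤ n := by omega
    have hV := congrArg (Nat.cast : ℕ → ZMod p) (nat_V1 n j hj')
    push_cast at hV
    have hM := choose_pred_cast hp (n-j) j (by omega)
    rw [show p - 1 - j = 2*n - j by omega] at hM
    rw [show n - j + j = n by omega] at hM
    rw [Nat.choose_symm hj'] at hM
    have h3 : (-1 : ZMod p)^j * (-1)^j = 1 := by
      rw [← pow_add, ← two_mul, pow_mul]; norm_num
    have hsgn : (-1 : ZMod p)^(n-j) = -(-1)^j := by
      have h1 : (-1 : ZMod p)^(n-j) * (-1)^j = (-1)^n := by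
        rw [← pow_add, show n-j+j = n by omega]
      have h2 : (-1:ZMod p)^n = -1 := Odd.neg_one_pow ⟨(n-1)/2, by omega⟩
      calc (-1 : ZMod p)^(n-j) = (-1 : ZMod p)^(n-j) * ((-1)^j * (-1)^j) := by rw [h3, mul_one]
        _ = (-1:ZMod p)^n * (-1)^j := by rw [← mul_assoc, h1]
        _ = -(-1)^j := by rw [h2]; ring
    have hL : ∑ k ∈ Finset.range (n+1), (n.choose k : ZMod p)^2 * (k.choose j : ZMod p)
        = ∑ k ∈ Finset.range (n+1),
            (n.choose k : ZMod p) * (n.choose k : ZMod p) * (k.choose j : ZMod p) := by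
      apply Finset.sum_congr rfl; intro k _; ring
    rw [hL, hV, hM, hsgn]
    ring
  · have hj2 : j = n+1 := by omega
    subst hj2
    rw [Nat.choose_eq_zero_of_lt (by omega : n < n+1)]
    have : ∀ k ∈ Finset.range (n+1),
        (n.choose k : ZMod p)^2 * ((k.choose (n+1) : ℕ) : ZMod p) = 0 := by
      intro k hk
      simp only [Finset.mem_range] at hk
      rw [Nat.choose_eq_zero_of_lt (by omega : k < n+1)]
      push_cast; ring
    rw [Finset.sum_congr rfl this]
    simp

/-- `∑_k C(n,k)²/(k+1) ≡ 0 (mod p)`. -/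
lemma B0 {p : ℕ} (hp : p.Prime) (n : ℕ) (hn : 2*n+1 = p) (hn0 : n ≠ 0) :
    ∑ k ∈ Finset.range (n+1), (n.choose k : ZMod p)^2 * ((k : ZMod p)+1)⁻¹ = 0 := by
  haveI := Fact.mk hp
  have h1inv : (2:ZMod p) * ((n : ZMod p)+1) = 1 := by
    have h : ((2*(n+1) : ℕ) : ZMod p) = ((p + 1 : ℕ) : ZMod p) := by rw [show 2*(n+1) = p+1 by omega]
    push_cast [ZMod.natCast_self] at h
    linear_combination h
  have hterm : ∀ k, k ≤ n → (n.choose k : ZMod p) * ((k : ZMod p)+1)⁻¹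
      = 2 * ((n+1).choose (k+1) : ZMod p) := by
    intro k hk
    have hu : ((k : ZMod p)+1) ≠ 0 := by
      have := zmod_unit (k+1) (by omega) (by omega : k+1 < p)
      push_cast at this; exact this
    have h1 := congrArg (Nat.cast : ℕ → ZMod p) (Nat.add_one_mul_choose_eq n k)
    push_cast at h1
    rw [← div_eq_mul_inv, div_eq_iff hu]
    linear_combination 2 * h1 - (n.choose k : ZMod p) * h1inv
  calc ∑ k ∈ Finset.range (n+1), (n.choose k : ZMod p)^2 * ((k : ZMod p)+1)⁻¹
      = ∑ k ∈ Finset.range (n+1), 2 * ((n.choose k * (n+1).choose (k+1) : ℕ) : ZMod p) := by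
        apply Finset.sum_congr rfl
        intro k hk
        simp only [Finset.mem_range] at hk
        have h := hterm k (by omega)
        push_cast
        calc (n.choose k : ZMod p)^2 * ((k:ZMod p)+1)⁻¹
            = (n.choose k : ZMod p) * ((n.choose k : ZMod p) * ((k:ZMod p)+1)⁻¹) := by ring
          _ = (n.choose k : ZMod p) * (2 * (((n+1).choose (k+1)) : ZMod p)) := by rw [h]
          _ = 2 * ((n.choose k : ZMod p) * (((n+1).choose (k+1)) : ZMod p)) := by ring
    _ = 2 * ((∑ k ∈ Finset.range (n+1), n.choose k * (n+1).choose (k+1) : ℕ) : ZMod p) := by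
        rw [← Finset.mul_sum, Nat.cast_sum]
    _ = 0 := by
        rw [nat_V2, show 2*n+1 = p from hn]
        have hdvd : p ∣ p.choose n := hp.dvd_choose_self hn0 (by omega)
        rw [(ZMod.natCast_eq_zero_iff _ _).mpr hdvd, mul_zero]

lemma E1 {p : ℕ} (hp : p.Prime) (n : ℕ) (hn : 2*n+1 = p) (hodd : n % 2 = 1) :
    Saux p n 2 * 2 = - Saux p n (-1) := by
  haveI := Fact.mk hp
  have hn0 : n ≠ 0 := by
    have := hp.two_le; omega
  have hu : ∀ k : ℕ, k ≤ n → ((k : ZMod p)+1) ≠ 0 := by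
    intro k hk
    have := zmod_unit (k+1) (by omega) (by omega : k+1 < p)
    push_cast at this; exact this
  have step1 : Saux p n 2 * 2
      = ∑ k ∈ Finset.range (n+1), ∑ j ∈ Finset.range (n+2),
          (n.choose k : ZMod p)^2 * ((k : ZMod p)+1)⁻¹ * ((k+1).choose j : ZMod p) := by
    rw [Saux, Finset.sum_mul]
    apply Finset.sum_congr rfl
    intro k hk
    simp only [Finset.mem_range] at hk
    have hpow : ((2:ZMod p))^(k+1) = ∑ j ∈ Finset.range (n+2), (((k+1).choose j : ℕ) : ZMod p) := by
      have h1 : ∑ j ∈ Finset.range (k+2), (k+1).choose j = 2^(k+1) := Nat.sum_range_choose (k+1)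
      have h2 : ∑ j ∈ Finset.range (n+2), (((k+1).choose j : ℕ) : ZMod p)
          = ∑ j ∈ Finset.range (k+2), (((k+1).choose j : ℕ) : ZMod p) := by
        symm; apply Finset.sum_subset
        · exact Finset.range_subset_range.mpr (by omega)
        · intro x hx hx2
          simp only [Finset.mem_range, not_lt] at hx hx2
          rw [Nat.choose_eq_zero_of_lt (by omega), Nat.cast_zero]
      rw [h2, ← Nat.cast_sum, h1]; push_cast; ring
    calc (n.choose k : ZMod p)^2 * 2^k * ((k : ZMod p)+1)⁻¹ * 2
        = (n.choose k : ZMod p)^2 * ((k : ZMod p)+1)⁻¹ * 2^(k+1) := by ring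
      _ = (n.choose k : ZMod p)^2 * ((k : ZMod p)+1)⁻¹
            * ∑ j ∈ Finset.range (n+2), (((k+1).choose j : ℕ) : ZMod p) := by rw [hpow]
      _ = ∑ j ∈ Finset.range (n+2),
            (n.choose k : ZMod p)^2 * ((k : ZMod p)+1)⁻¹ * (((k+1).choose j : ℕ) : ZMod p) :=
          Finset.mul_sum _ _ _
  rw [step1, Finset.sum_comm, Finset.sum_range_succ']
  have hzero : ∑ k ∈ Finset.range (n+1),
      (n.choose k : ZMod p)^2 * ((k : ZMod p)+1)⁻¹ * ((k+1).choose 0 : ZMod p) = 0 := by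
    rw [← B0 hp n hn hn0]
    apply Finset.sum_congr rfl
    intro k _
    rw [Nat.choose_zero_right]
    push_cast
    try ring
  rw [hzero, add_zero]
  have hinner : ∀ j ∈ Finset.range (n+1),
      ∑ k ∈ Finset.range (n+1),
        (n.choose k : ZMod p)^2 * ((k : ZMod p)+1)⁻¹ * ((k+1).choose (j+1) : ZMod p)
      = -(-1)^j * (n.choose j : ZMod p)^2 * ((j : ZMod p)+1)⁻¹ := by
    intro j hj
    simp only [Finset.mem_range] at hj
    have huj := hu j (by omega)
    have hstep : ∀ k ∈ Finset.range (n+1),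
        (n.choose k : ZMod p)^2 * ((k : ZMod p)+1)⁻¹ * ((k+1).choose (j+1) : ZMod p)
        = (n.choose k : ZMod p)^2 * (k.choose j : ZMod p) * ((j : ZMod p)+1)⁻¹ := by
      intro k hk
      simp only [Finset.mem_range] at hk
      have huk := hu k (by omega)
      have h1 := congrArg (Nat.cast : ℕ → ZMod p) (Nat.add_one_mul_choose_eq k j)
      push_cast at h1
      have h2 : (((k+1).choose (j+1) : ℕ) : ZMod p) * ((k : ZMod p)+1)⁻¹
          = ((k.choose j : ℕ) : ZMod p) * ((j : ZMod p)+1)⁻¹ := by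
        rw [← div_eq_mul_inv, ← div_eq_mul_inv, div_eq_div_iff huk huj]
        push_cast
        linear_combination - h1
      push_cast
      calc (n.choose k : ZMod p)^2 * ((k : ZMod p)+1)⁻¹ * (((k+1).choose (j+1)) : ZMod p)
          = (n.choose k : ZMod p)^2 * ((((k+1).choose (j+1)) : ZMod p) * ((k : ZMod p)+1)⁻¹) := by
            ring
        _ = (n.choose k : ZMod p)^2 * (((k.choose j) : ZMod p) * ((j : ZMod p)+1)⁻¹) := by
            rw [← h2]
        _ = (n.choose k : ZMod p)^2 * ((k.choose j) : ZMod p) * ((j : ZMod p)+1)⁻¹ := by ring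
    rw [Finset.sum_congr rfl hstep, ← Finset.sum_mul, K0 hp n hn hodd j (by omega)]
  rw [Finset.sum_congr rfl hinner, Saux, ← Finset.sum_neg_distrib]
  apply Finset.sum_congr rfl
  intro j _
  ring

lemma E2 {p : ℕ} (hp : p.Prime) (n : ℕ) (hn : 2*n+1 = p) (hodd : n % 2 = 1) :
    Taux p n 2 = -2 * Taux p n (-1) := by
  haveI := Fact.mk hp
  have hknat : ∀ k j : ℕ, k * k.choose j = j * k.choose j + (j+1) * k.choose (j+1) := by
    intro k j
    rcases le_or_gt j k with h | h
    · obtain ⟨d, rfl⟩ : ∃ d, k = j + d := ⟨k - j, by omega⟩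
      have h2 := Nat.choose_succ_right_eq (j+d) j
      rw [show j + d - j = d by omega] at h2
      calc (j+d) * (j+d).choose j = j * (j+d).choose j + (j+d).choose j * d := by ring
        _ = j * (j+d).choose j + (j+1) * (j+d).choose (j+1) := by rw [← h2]; ring
    · rw [Nat.choose_eq_zero_of_lt h, Nat.choose_eq_zero_of_lt (by omega)]
      simp
  have step1 : Taux p n 2
      = ∑ k ∈ Finset.range (n+1), ∑ j ∈ Finset.range (n+1),
          (k : ZMod p) * (n.choose k : ZMod p)^2 * (k.choose j : ZMod p) := by
    rw [Taux]
    apply Finset.sum_congr rfl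
    intro k hk
    simp only [Finset.mem_range] at hk
    have hpow : ((2:ZMod p))^k = ∑ j ∈ Finset.range (n+1), ((k.choose j : ℕ) : ZMod p) := by
      have h1 : ∑ j ∈ Finset.range (k+1), k.choose j = 2^k := Nat.sum_range_choose k
      have h2 : ∑ j ∈ Finset.range (n+1), ((k.choose j : ℕ) : ZMod p)
          = ∑ j ∈ Finset.range (k+1), ((k.choose j : ℕ) : ZMod p) := by
        symm; apply Finset.sum_subset
        · exact Finset.range_subset_range.mpr (by omega)
        · intro x hx hx2
          simp only [Finset.mem_range, not_lt] at hx hx2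
          rw [Nat.choose_eq_zero_of_lt (by omega), Nat.cast_zero]
      rw [h2, ← Nat.cast_sum, h1]; push_cast; ring
    rw [hpow, Finset.mul_sum]
  rw [step1, Finset.sum_comm]
  have hinner : ∀ j ∈ Finset.range (n+1),
      ∑ k ∈ Finset.range (n+1), (k : ZMod p) * (n.choose k : ZMod p)^2 * (k.choose j : ZMod p)
      = (j : ZMod p) * (-(-1)^j * (n.choose j : ZMod p)^2)
        + ((j : ZMod p)+1) * (-(-1)^(j+1) * (n.choose (j+1) : ZMod p)^2) := by
    intro j hj
    simp only [Finset.mem_range] at hj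
    have hsplit : ∀ k ∈ Finset.range (n+1),
        (k : ZMod p) * (n.choose k : ZMod p)^2 * (k.choose j : ZMod p)
        = (j : ZMod p) * ((n.choose k : ZMod p)^2 * (k.choose j : ZMod p))
          + ((j : ZMod p)+1) * ((n.choose k : ZMod p)^2 * (k.choose (j+1) : ZMod p)) := by
      intro k _
      have h1 := congrArg (Nat.cast : ℕ → ZMod p) (hknat k j)
      push_cast at h1
      linear_combination (n.choose k : ZMod p)^2 * h1
    rw [Finset.sum_congr rfl hsplit, Finset.sum_add_distrib, ← Finset.mul_sum, ← Finset.mul_sum,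
      K0 hp n hn hodd j (by omega), K0 hp n hn hodd (j+1) (by omega)]
  rw [Finset.sum_congr rfl hinner, Finset.sum_add_distrib]
  have hT1 : ∑ j ∈ Finset.range (n+1), (j : ZMod p) * (-(-1)^j * (n.choose j : ZMod p)^2)
      = - Taux p n (-1) := by
    rw [Taux, ← Finset.sum_neg_distrib]
    apply Finset.sum_congr rfl
    intro j _
    ring
  have hT2 : ∑ j ∈ Finset.range (n+1), ((j : ZMod p)+1) * (-(-1)^(j+1) * (n.choose (j+1) : ZMod p)^2)
      = - Taux p n (-1) := by
    set f : ℕ → ZMod p := fun i => -((i:ZMod p) * (n.choose i : ZMod p)^2 * (-1)^i) with hf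
    have e1 : ∑ j ∈ Finset.range (n+1), ((j : ZMod p)+1) * (-(-1)^(j+1) * (n.choose (j+1) : ZMod p)^2)
        = ∑ j ∈ Finset.range (n+1), f (j+1) := by
      apply Finset.sum_congr rfl
      intro j _
      rw [hf]
      push_cast
      ring
    have e2 := Finset.sum_range_succ' f (n+1)
    have e3 := Finset.sum_range_succ f (n+1)
    have hf0 : f 0 = 0 := by simp [hf]
    have hfn1 : f (n+1) = 0 := by
      simp [hf, Nat.choose_eq_zero_of_lt (by omega : n < n+1)]
    have e4 : ∑ i ∈ Finset.range (n+1), f i = -Taux p n (-1) := by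
      rw [Taux, ← Finset.sum_neg_distrib]
    rw [e1]
    rw [e2] at e3
    rw [hf0, hfn1, add_zero] at e3
    rw [e3, e4]
    ring
  rw [hT1, hT2]
  ring

lemma two_n_one {p n : ℕ} (hn : 2*n+1 = p) : (2:ZMod p) * (n:ZMod p) + 1 = 0 := by
  have h : ((2*n+1 : ℕ) : ZMod p) = 0 := by rw [hn]; exact ZMod.natCast_self p
  push_cast at h
  linear_combination h

lemma choose_inv_term {p : ℕ} (hp : p.Prime) (n : ℕ) (hn : 2*n+1 = p) (k : ℕ) (hk : k ≤ n) :
    (n.choose k : ZMod p) * ((k : ZMod p)+1)⁻¹ = 2 * ((n+1).choose (k+1) : ZMod p) := by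
  haveI := Fact.mk hp
  have h1inv : (2:ZMod p) * ((n : ZMod p)+1) = 1 := by
    have h := two_n_one hn
    linear_combination h
  have hge := hp.two_le
  have hu : ((k : ZMod p)+1) ≠ 0 := by
    have := zmod_unit (k+1) (by omega) (by omega : k+1 < p)
    push_cast at this; exact this
  have h1 := congrArg (Nat.cast : ℕ → ZMod p) (Nat.add_one_mul_choose_eq n k)
  push_cast at h1
  rw [← div_eq_mul_inv, div_eq_iff hu]
  linear_combination 2 * h1 - (n.choose k : ZMod p) * h1inv

lemma EV3 {p : ℕ} (hp : p.Prime) (n : ℕ) (hn : 2*n+1 = p) :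
    Saux p n (-1) = 2 * ((-1)^(n/2) * (n.choose (n/2) : ZMod p)) := by
  haveI := Fact.mk hp
  have hAV := congrArg (Int.cast : ℤ → ZMod p) (AV1 n)
  push_cast at hAV
  calc Saux p n (-1)
      = ∑ k ∈ Finset.range (n+1),
          2 * ((-1:ZMod p)^k * (n.choose k : ZMod p) * ((n+1).choose (k+1) : ZMod p)) := by
        rw [Saux]
        apply Finset.sum_congr rfl
        intro k hk
        simp only [Finset.mem_range] at hk
        have h := choose_inv_term hp n hn k (by omega)
        calc (n.choose k : ZMod p)^2 * (-1:ZMod p)^k * ((k : ZMod p)+1)⁻¹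
            = ((-1:ZMod p)^k * (n.choose k : ZMod p))
                * ((n.choose k : ZMod p) * ((k : ZMod p)+1)⁻¹) := by ring
          _ = ((-1:ZMod p)^k * (n.choose k : ZMod p)) * (2 * ((n+1).choose (k+1) : ZMod p)) := by
              rw [h]
          _ = 2 * ((-1:ZMod p)^k * (n.choose k : ZMod p) * ((n+1).choose (k+1) : ZMod p)) := by
              ring
    _ = 2 * ∑ k ∈ Finset.range (n+1),
          (-1:ZMod p)^k * (n.choose k : ZMod p) * ((n+1).choose (k+1) : ZMod p) :=
        (Finset.mul_sum _ _ _).symm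
    _ = 2 * ((-1)^(n/2) * (n.choose (n/2) : ZMod p)) := by rw [hAV]

lemma EV4 {p : ℕ} (hp : p.Prime) (n : ℕ) (hn : 2*n+1 = p) (hn0 : n ≠ 0) :
    (2:ZMod p) * Taux p n (-1)
      = (-1)^((n-1)/2) * ((n-1).choose ((n-1)/2) : ZMod p) := by
  haveI := Fact.mk hp
  have h2n1 := two_n_one hn
  have hAV := congrArg (Int.cast : ℤ → ZMod p) (AV1 (n-1))
  rw [show n-1+1 = n by omega] at hAV
  push_cast at hAV
  rw [Taux, Finset.sum_range_succ']
  have h0 : ((0:ℕ) : ZMod p) * (n.choose 0 : ZMod p)^2 * (-1:ZMod p)^0 = 0 := by simp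
  rw [h0, add_zero, Finset.mul_sum]
  rw [← hAV]
  apply Finset.sum_congr rfl
  intro i hi
  simp only [Finset.mem_range] at hi
  have hs := Nat.add_one_mul_choose_eq (n-1) i
  rw [show n-1+1 = n by omega] at hs
  have hcast_i := congrArg (Nat.cast : ℕ → ZMod p) hs
  push_cast at hcast_i
  push_cast
  linear_combination (2*(-1:ZMod p)^i*(n.choose (i+1):ZMod p)) * hcast_i
    - ((-1:ZMod p)^i * ((n-1).choose i:ZMod p) * (n.choose (i+1):ZMod p)) * h2n1

/-- Theorem 1.3(i), congruence (1.5): for a prime `p ≡ 3 (mod 4)`, the five quantities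
`∑_{k=0}^{(p-1)/2} C(2k,k) C_k / 8^k`, `-2 ∑ k C(2k,k)² / 8^k`,
`-(1/2) ∑ C(2k,k) C_k / (-16)^k`, `4 ∑ k C(2k,k)² / (-16)^k` and
`((-1)^{(p+1)/4}/2) C((p+1)/2, (p+1)/4)` are all congruent modulo `p`. -/
theorem stmt_3 (p : ℕ) (hp : p.Prime) (hp4 : p % 4 = 3) :
    (∑ k ∈ Finset.range ((p - 1) / 2 + 1),
        (Nat.choose (2 * k) k * catalan k : ZMod p) * ((8 : ZMod p)⁻¹) ^ k) =
      -2 * ∑ k ∈ Finset.range ((p - 1) / 2 + 1),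
        (k : ZMod p) * (Nat.choose (2 * k) k : ZMod p) ^ 2 * ((8 : ZMod p)⁻¹) ^ k ∧
    (∑ k ∈ Finset.range ((p - 1) / 2 + 1),
        (Nat.choose (2 * k) k * catalan k : ZMod p) * ((8 : ZMod p)⁻¹) ^ k) =
      -(2 : ZMod p)⁻¹ * ∑ k ∈ Finset.range ((p - 1) / 2 + 1),
        (Nat.choose (2 * k) k * catalan k : ZMod p) * ((-16 : ZMod p)⁻¹) ^ k ∧
    (∑ k ∈ Finset.range ((p - 1) / 2 + 1),
        (Nat.choose (2 * k) k * catalan k : ZMod p) * ((8 : ZMod p)⁻¹) ^ k) =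
      4 * ∑ k ∈ Finset.range ((p - 1) / 2 + 1),
        (k : ZMod p) * (Nat.choose (2 * k) k : ZMod p) ^ 2 * ((-16 : ZMod p)⁻¹) ^ k ∧
    (∑ k ∈ Finset.range ((p - 1) / 2 + 1),
        (Nat.choose (2 * k) k * catalan k : ZMod p) * ((8 : ZMod p)⁻¹) ^ k) =
      (-1 : ZMod p) ^ ((p + 1) / 4) * (2 : ZMod p)⁻¹ *
        (Nat.choose ((p + 1) / 2) ((p + 1) / 4) : ZMod p) := by
  haveI := Fact.mk hp
  have hp2 := hp.two_le
  obtain ⟨t, ht⟩ : ∃ t, p = 4*t+3 := ⟨p/4, by omega⟩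
  set n := (p - 1) / 2 with hndef
  have hn2 : 2*n+1 = p := by omega
  have hnt : n = 2*t+1 := by omega
  have hodd : n % 2 = 1 := by omega
  have hn0 : n ≠ 0 := by omega
  -- basic units
  have h2ne : (2 : ZMod p) ≠ 0 := by
    have h := zmod_unit (p := p) 2 (by norm_num) (by omega)
    push_cast at h; exact h
  have h8ne : (8 : ZMod p) ≠ 0 := by
    have h : (8 : ZMod p) = 2^3 := by norm_num
    rw [h]; exact pow_ne_zero 3 h2ne
  have h16ne : (-16 : ZMod p) ≠ 0 := by
    have h : (-16 : ZMod p) = -(2^4) := by norm_num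
    rw [h]; exact neg_ne_zero.mpr (pow_ne_zero 4 h2ne)
  have hu : ∀ k : ℕ, k ≤ n → ((k : ZMod p)+1) ≠ 0 := by
    intro k hk
    have h := zmod_unit (k+1) (by omega) (by omega : k+1 < p)
    push_cast at h; exact h
  -- power conversions
  have hpow8 : ∀ k : ℕ, (-4:ZMod p)^k * (-4)^k * ((8:ZMod p)⁻¹)^k = 2^k := by
    intro k
    rw [← mul_pow, ← mul_pow]
    congr 1
    have h1 : ((-4:ZMod p) * -4) = 2 * 8 := by norm_num
    rw [h1, mul_assoc, mul_inv_cancel₀ h8ne, mul_one]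
  have hpow16 : ∀ k : ℕ, (-4:ZMod p)^k * (-4)^k * ((-16:ZMod p)⁻¹)^k = (-1)^k := by
    intro k
    rw [← mul_pow, ← mul_pow]
    congr 1
    have h1 : ((-4:ZMod p) * -4) = (-1) * (-16) := by norm_num
    rw [h1, mul_assoc, mul_inv_cancel₀ h16ne, mul_one]
  -- cast facts
  have hcb := cb_cast hp n hn2
  have hcat : ∀ k, k ≤ n → ((k:ZMod p)+1) * (catalan k : ZMod p) = ((2*k).choose k : ZMod p) := by
    intro k hk
    have h1 := congrArg (Nat.cast : ℕ → ZMod p) (succ_mul_catalan_eq_centralBinom k)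
    rw [Nat.centralBinom_eq_two_mul_choose] at h1
    push_cast at h1
    exact h1
  -- conversions of the four sums
  have hS8 : (∑ k ∈ Finset.range (n + 1),
        (Nat.choose (2 * k) k * catalan k : ZMod p) * ((8 : ZMod p)⁻¹) ^ k) = Saux p n 2 := by
    rw [Saux]
    apply Finset.sum_congr rfl
    intro k hk
    simp only [Finset.mem_range] at hk
    have hk' : k ≤ n := by omega
    have ecat := hcat k hk'
    rw [hcb k hk'] at ecat
    have huinv : ((k:ZMod p)+1) * ((k:ZMod p)+1)⁻¹ = 1 := mul_inv_cancel₀ (hu k hk')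
    push_cast
    rw [hcb k hk']
    apply mul_left_cancel₀ (hu k hk')
    linear_combination ((n.choose k:ZMod p) * ((8:ZMod p)⁻¹)^k * (-4:ZMod p)^k) * ecat
      + ((n.choose k:ZMod p)^2) * hpow8 k
      - ((n.choose k:ZMod p)^2 * (2:ZMod p)^k) * huinv
  have hS16 : (∑ k ∈ Finset.range (n + 1),
        (Nat.choose (2 * k) k * catalan k : ZMod p) * ((-16 : ZMod p)⁻¹) ^ k)
      = Saux p n (-1) := by
    rw [Saux]
    apply Finset.sum_congr rfl
    intro k hk
    simp only [Finset.mem_range] at hk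
    have hk' : k ≤ n := by omega
    have ecat := hcat k hk'
    rw [hcb k hk'] at ecat
    have huinv : ((k:ZMod p)+1) * ((k:ZMod p)+1)⁻¹ = 1 := mul_inv_cancel₀ (hu k hk')
    push_cast
    rw [hcb k hk']
    apply mul_left_cancel₀ (hu k hk')
    linear_combination ((n.choose k:ZMod p) * ((-16:ZMod p)⁻¹)^k * (-4:ZMod p)^k) * ecat
      + ((n.choose k:ZMod p)^2) * hpow16 k
      - ((n.choose k:ZMod p)^2 * (-1:ZMod p)^k) * huinv
  have hT8 : (∑ k ∈ Finset.range (n + 1),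
        (k : ZMod p) * (Nat.choose (2 * k) k : ZMod p) ^ 2 * ((8 : ZMod p)⁻¹) ^ k)
      = Taux p n 2 := by
    rw [Taux]
    apply Finset.sum_congr rfl
    intro k hk
    simp only [Finset.mem_range] at hk
    rw [hcb k (by omega)]
    linear_combination ((k:ZMod p) * (n.choose k:ZMod p)^2) * hpow8 k
  have hT16 : (∑ k ∈ Finset.range (n + 1),
        (k : ZMod p) * (Nat.choose (2 * k) k : ZMod p) ^ 2 * ((-16 : ZMod p)⁻¹) ^ k)
      = Taux p n (-1) := by
    rw [Taux]
    apply Finset.sum_congr rfl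
    intro k hk
    simp only [Finset.mem_range] at hk
    rw [hcb k (by omega)]
    linear_combination ((k:ZMod p) * (n.choose k:ZMod p)^2) * hpow16 k
  -- values
  have hE1 := E1 hp n hn2 hodd
  have hE2 := E2 hp n hn2 hodd
  have hEV3 := EV3 hp n hn2
  have hEV4 := EV4 hp n hn2 hn0
  rw [show n/2 = t by rw [hnt]; omega] at hEV3
  rw [show (n-1)/2 = t by rw [hnt]; omega] at hEV4
  have hA1 : Saux p n 2 = -((-1:ZMod p)^t * (n.choose t : ZMod p)) := by
    apply mul_right_cancel₀ h2ne
    rw [hE1, hEV3]; ring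
  have h2n1 := two_n_one hn2
  have hrel : (n.choose t : ZMod p) = -2 * ((n-1).choose t : ZMod p) := by
    have hs := Nat.add_one_mul_choose_eq (n-1) t
    rw [show n-1+1 = n by omega] at hs
    have hsym : n.choose (t+1) = n.choose t := by
      rw [← Nat.choose_symm (by omega : t+1 ≤ n)]; congr 1; omega
    rw [hsym] at hs
    have hc := congrArg (Nat.cast : ℕ → ZMod p) hs
    push_cast at hc
    have h4t : (4:ZMod p) * ((t:ZMod p)+1) = 1 := by
      have h := congrArg (Nat.cast : ℕ → ZMod p) (show 4*(t+1) = p+1 by omega)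
      push_cast [ZMod.natCast_self] at h
      linear_combination h
    linear_combination (-4 : ZMod p) * hc - (n.choose t : ZMod p) * h4t
      + 2 * ((n-1).choose t : ZMod p) * h2n1
  have hC2 : ((n+1).choose (t+1) : ZMod p) = 2 * (n.choose t : ZMod p) := by
    have hnat : (n+1).choose (t+1) = n.choose t + n.choose (t+1) := Nat.choose_succ_succ n t
    have hsym : n.choose (t+1) = n.choose t := by
      rw [← Nat.choose_symm (by omega : t+1 ≤ n)]; congr 1; omega
    rw [hnat, hsym]
    push_cast; ring
  refine ⟨?_, ?_, ?_, ?_⟩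
  · rw [hS8, hT8, hA1, hE2]
    linear_combination (-(-1:ZMod p)^t) * hrel - 2 * hEV4
  · rw [hS8, hS16]
    apply mul_right_cancel₀ h2ne
    rw [hE1]
    field_simp
  · rw [hS8, hT16, hA1]
    linear_combination (-(-1:ZMod p)^t) * hrel - 2 * hEV4
  · rw [hS8, hA1, show (p+1)/2 = n+1 by omega, show (p+1)/4 = t+1 by omega, hC2]
    have h2inv : (2:ZMod p) * (2:ZMod p)⁻¹ = 1 := mul_inv_cancel₀ h2ne
    linear_combination (-(-1:ZMod p)^(t+1) * (n.choose t:ZMod p)) * h2inv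
end

section
/- Let p be an odd prime and let d ∈ {0,1,...,(p-1)/2} with d ≡ (p+1)/2 (mod 2). Then Σ_{k=0}^{(p-1)/2} C(2k,k)·C(2k,k+d)·8^{-k} ≡ 0 (mod p). -/
open Finset Polynomial


lemma intD (a : ℕ) (ha : a % 2 = 1) :
    ∑ m ∈ range (a+1), ((a.choose m : ℤ)) * (-2)^m * ((2*a - m).choose a : ℤ) = 0 := by
  have H : ∑ m ∈ range (a+1),
      Polynomial.C ((a.choose m : ℤ) * (-2)^m) * (X + 1)^(2*a - m)
      = ((X : ℤ[X])^2 - 1)^a := by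
    have expand : ((X : ℤ[X]) - 1)^a
        = ∑ m ∈ range (a+1), (-2 : ℤ[X])^m * (X+1)^(a-m) * (a.choose m : ℤ[X]) := by
      rw [show (X : ℤ[X]) - 1 = -2 + (X + 1) by ring, add_pow]
    have h2 : ((X : ℤ[X])^2 - 1)^a = (X+1)^a * ((X : ℤ[X]) - 1)^a := by
      rw [← mul_pow]; ring_nf
    rw [h2, expand, Finset.mul_sum]
    refine Finset.sum_congr rfl fun m hm => ?_
    have hm' : m ≤ a := Nat.lt_succ_iff.mp (Finset.mem_range.mp hm)
    rw [show 2*a - m = a + (a - m) by omega, pow_add]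
    simp only [map_mul, map_pow, map_neg, Polynomial.C_eq_natCast, map_ofNat]
    ring
  have HR : (((X:ℤ[X])^2 - 1)^a).coeff a = 0 := by
    have e : ((X:ℤ[X])^2 - 1)^a
        = ∑ i ∈ range (a+1), Polynomial.C (((-1:ℤ))^(a-i) * (a.choose i : ℤ)) * X^(2*i) := by
      rw [show ((X:ℤ[X])^2 - 1) = (X^2 + (-1)) by ring, add_pow]
      refine Finset.sum_congr rfl fun i hi => ?_
      simp only [map_mul, map_pow, map_neg, map_one, Polynomial.C_eq_natCast]
      rw [← pow_mul]; ring
    rw [e]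
    simp only [Polynomial.finset_sum_coeff, Polynomial.coeff_C_mul, Polynomial.coeff_X_pow]
    refine Finset.sum_eq_zero fun i hi => ?_
    rw [if_neg (by omega)]; ring
  have H2 := congrArg (fun q => Polynomial.coeff q a) H
  simp only [Polynomial.finset_sum_coeff, Polynomial.coeff_C_mul,
    Polynomial.coeff_X_add_one_pow] at H2
  rw [HR] at H2
  rw [← H2]


lemma cast_ne_zero_of_lt (p t : ℕ) (hp : p.Prime) (ht : 0 < t) (ht2 : t < p) :
    ((t : ZMod p)) ≠ 0 := by
  haveI : NeZero p := ⟨hp.ne_zero⟩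
  rw [Ne, ZMod.natCast_eq_zero_iff]
  exact fun h => absurd (Nat.le_of_dvd ht h) (by omega)

lemma fact_ne_zero (p t : ℕ) (hp : p.Prime) (ht : t < p) :
    ((t.factorial : ZMod p)) ≠ 0 := by
  haveI : NeZero p := ⟨hp.ne_zero⟩
  rw [Ne, ZMod.natCast_eq_zero_iff]
  intro h
  exact absurd ((Nat.Prime.dvd_factorial hp).mp h) (by omega)

lemma choose_neg (p : ℕ) (hp : p.Prime) (a : ℕ) :
    ∀ j, a + j ≤ p - 1 →
    (((p - 1 - a).choose j : ZMod p)) = (-1) ^ j * ((a + j).choose j : ZMod p) := by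
  haveI : Fact p.Prime := ⟨hp⟩
  intro j
  induction j with
  | zero => simp
  | succ j ih =>
    intro hj
    have h2 : 2 ≤ p := hp.two_le
    have ih := ih (by omega)
    have r1 : (p - 1 - a).choose (j+1) * (j+1) = (p - 1 - a).choose j * (p - 1 - a - j) :=
      Nat.choose_succ_right_eq _ _
    have r2 : (a + j + 1) * (a + j).choose j = (a + j + 1).choose (j+1) * (j+1) := by
      simpa using Nat.add_one_mul_choose_eq (a + j) j
    have hcast : ((p - 1 - a - j : ℕ) : ZMod p) = -((a : ZMod p) + j + 1) := by
      have hsum : (p - 1 - a - j) + (a + j + 1) = p := by omega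
      have h0 := congrArg (Nat.cast : ℕ → ZMod p) hsum
      push_cast at h0
      rw [ZMod.natCast_self] at h0
      linear_combination h0
    have hjne : ((j + 1 : ℕ) : ZMod p) ≠ 0 :=
      cast_ne_zero_of_lt p (j+1) hp (by omega) (by omega)
    apply mul_right_cancel₀ hjne
    have c1 := congrArg (Nat.cast : ℕ → ZMod p) r1
    have c2 := congrArg (Nat.cast : ℕ → ZMod p) r2
    push_cast at c1 c2
    rw [hcast] at c1
    rw [show a + (j+1) = a + j + 1 by omega]
    push_cast
    linear_combination c1 - ((a : ZMod p) + j + 1) * ih - (-1 : ZMod p)^j * c2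

lemma central (p n : ℕ) (hp : p.Prime) (h2n : 2*n + 1 = p) :
    ∀ k, k ≤ n → (((2*k).factorial : ZMod p)) * ((n-k).factorial : ZMod p)
      = (-4)^k * (k.factorial : ZMod p) * (n.factorial : ZMod p) := by
  haveI : Fact p.Prime := ⟨hp⟩
  intro k
  induction k with
  | zero => simp
  | succ k ih =>
    intro hk
    have ih := ih (by omega)
    have hnk : ((n - k : ℕ) : ZMod p) ≠ 0 :=
      cast_ne_zero_of_lt p (n-k) hp (by omega) (by omega)
    apply mul_right_cancel₀ hnk
    have e1 : (2*(k+1)).factorial = (2*k+2) * ((2*k+1) * (2*k).factorial) := by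
      rw [show 2*(k+1) = (2*k+1)+1 by ring, Nat.factorial_succ, Nat.factorial_succ]
    have e2 : (n - k).factorial = (n - k) * (n - (k+1)).factorial := by
      rw [show n - k = (n - (k+1)) + 1 by omega, Nat.factorial_succ]
    have key : (2*(k : ZMod p)+1) = -2 * ((n - k : ℕ) : ZMod p) := by
      have hsum : (2*k+1) + 2*(n-k) = p := by omega
      have h0 := congrArg (Nat.cast : ℕ → ZMod p) hsum
      push_cast at h0
      rw [ZMod.natCast_self] at h0
      linear_combination h0
    have c1 := congrArg (Nat.cast : ℕ → ZMod p) e1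
    have c2 := congrArg (Nat.cast : ℕ → ZMod p) e2
    push_cast at c1 c2
    rw [c1, Nat.factorial_succ]
    push_cast
    rw [key]
    linear_combination
      (-((2*(k:ZMod p)+2)*(-2)*((n-k:ℕ):ZMod p)) * (((2*k).factorial : ZMod p))) * c2
      + ((2*(k:ZMod p)+2)*(-2)*((n-k:ℕ):ZMod p)) * ih

lemma term_eq (p n d m : ℕ) (hp : p.Prime) (h2n : 2*n+1 = p) (hdn : d ≤ n) (hm : m ≤ n - d) :
    ((Nat.choose (2*(d+m)) (d+m) : ZMod p)) * (Nat.choose (2*(d+m)) ((d+m)+d) : ZMod p)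
        * ((8 : ZMod p)⁻¹)^(d+m)
    = (2^d * ((n.factorial : ZMod p))^2 * (((n-d).factorial : ZMod p))⁻¹
          * (((n+d).factorial : ZMod p))⁻¹)
      * (2^m * ((n-d).choose m : ZMod p) * ((n+d).choose (m + 2*d) : ZMod p)) := by
  haveI : Fact p.Prime := ⟨hp⟩
  have hp3 : 3 ≤ p := by have := hp.two_le; omega
  have h2 : (2 : ZMod p) ≠ 0 := cast_ne_zero_of_lt p 2 hp (by omega) (by omega)
  have h8 : (8 : ZMod p) ≠ 0 := by
    have : (8 : ZMod p) = 2^3 := by norm_num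
    rw [this]; exact pow_ne_zero _ h2
  -- notation
  set K := ZMod p
  -- choose/factorial relations
  have E1n := Nat.choose_mul_factorial_mul_factorial (show d+m ≤ 2*(d+m) by omega)
  rw [show 2*(d+m) - (d+m) = d+m by omega] at E1n
  have E2n := Nat.choose_mul_factorial_mul_factorial (show (d+m)+d ≤ 2*(d+m) by omega)
  rw [show 2*(d+m) - ((d+m)+d) = m by omega, show (d+m)+d = m+2*d by omega] at E2n
  have E4n := Nat.choose_mul_factorial_mul_factorial (show m ≤ n-d by omega)
  have E5n := Nat.choose_mul_factorial_mul_factorial (show m+2*d ≤ n+d by omega)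
  rw [show n+d - (m+2*d) = n-d-m by omega] at E5n
  have E1 := congrArg (Nat.cast : ℕ → K) E1n
  have E2 := congrArg (Nat.cast : ℕ → K) E2n
  have E4 := congrArg (Nat.cast : ℕ → K) E4n
  have E5 := congrArg (Nat.cast : ℕ → K) E5n
  push_cast +zetaDelta at E1 E2 E4 E5
  have E3 := central p n hp h2n (d+m) (by omega)
  rw [show n - (d+m) = n-d-m by omega] at E3
  -- scalar power identity
  have hq : ((-4 : K))^(d+m) * (-4)^(d+m) * ((8:K)⁻¹)^(d+m) = 2^d * 2^m := by
    have hb : ((-4:K)) * (-4) * (8:K)⁻¹ = 2 := by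
      have h8' : (8:K) ≠ 0 := h8
      rw [show ((-4:K)) * (-4) = 2 * 8 by norm_num, mul_assoc, mul_inv_cancel₀ h8', mul_one]
    rw [← mul_pow, ← mul_pow, hb, pow_add]
  -- nonzero facts
  have hFk : ((d+m).factorial : K) ≠ 0 := fact_ne_zero p _ hp (by omega)
  have hFm : (m.factorial : K) ≠ 0 := fact_ne_zero p _ hp (by omega)
  have hFmd : (((m+2*d)).factorial : K) ≠ 0 := fact_ne_zero p _ hp (by omega)
  have hFam : ((n-d-m).factorial : K) ≠ 0 := fact_ne_zero p _ hp (by omega)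
  have hFa : ((n-d).factorial : K) ≠ 0 := fact_ne_zero p _ hp (by omega)
  have hFnd : ((n+d).factorial : K) ≠ 0 := fact_ne_zero p _ hp (by omega)
  have hv : ((8:K))^(d+m) ≠ 0 := pow_ne_zero _ h8
  rw [show (d+m)+d = m+2*d by omega]
  set c1 := ((2*(d+m)).choose (d+m) : K)
  set c2 := ((2*(d+m)).choose (m+2*d) : K)
  set c4 := ((n-d).choose m : K)
  set c5 := ((n+d).choose (m+2*d) : K)
  set F2k := (((2*(d+m)).factorial : K))
  set Fk := (((d+m).factorial : K))
  set Fm := ((m.factorial : K))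
  set Fmd := (((m+2*d).factorial : K))
  set Fam := (((n-d-m).factorial : K))
  set Fa := (((n-d).factorial : K))
  set Fnd := (((n+d).factorial : K))
  set Fn := ((n.factorial : K))
  set u := ((8:K)⁻¹)^(d+m)
  set v := ((8:K))^(d+m)
  set R := ((-4 : K))^(d+m)
  have huv : u * v = 1 := by
    rw [show u * v = ((8:K)⁻¹ * 8)^(d+m) from (mul_pow _ _ _).symm, inv_mul_cancel₀ h8,
      one_pow]
  have hP : Fk*Fk*Fmd*Fm*(Fam*Fam)*(Fa*Fnd)*v ≠ 0 := by
    repeat' apply mul_ne_zero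
    all_goals assumption
  apply mul_right_cancel₀ hP
  have hA : Fa⁻¹ * Fa = 1 := inv_mul_cancel₀ hFa
  have hN : Fnd⁻¹ * Fnd = 1 := inv_mul_cancel₀ hFnd
  have L : c1*c2*u*(Fk*Fk*Fmd*Fm*(Fam*Fam)*(Fa*Fnd)*v)
      = (2^d*2^m) * (Fk^2*Fn^2*(Fa*Fnd)*v) := by
    calc c1*c2*u*(Fk*Fk*Fmd*Fm*(Fam*Fam)*(Fa*Fnd)*v)
        = ((c1*Fk*Fk)*Fam)*((c2*Fmd*Fm)*Fam)*(u*((Fa*Fnd)*v)) := by ring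
      _ = ((F2k*Fam))*((F2k*Fam))*(u*((Fa*Fnd)*v)) := by rw [E1, E2]
      _ = ((R*Fk*Fn))*((R*Fk*Fn))*(u*((Fa*Fnd)*v)) := by rw [E3]
      _ = (R*R*u)*(Fk^2*Fn^2*(Fa*Fnd)*v) := by ring
      _ = (2^d*2^m) * (Fk^2*Fn^2*(Fa*Fnd)*v) := by rw [hq]
  have Rr : (2^d * Fn^2 * Fa⁻¹ * Fnd⁻¹) * (2^m * c4 * c5)*(Fk*Fk*Fmd*Fm*(Fam*Fam)*(Fa*Fnd)*v)
      = (2^d*2^m) * (Fk^2*Fn^2*(Fa*Fnd)*v) := by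
    calc (2^d * Fn^2 * Fa⁻¹ * Fnd⁻¹) * (2^m * c4 * c5)*(Fk*Fk*Fmd*Fm*(Fam*Fam)*(Fa*Fnd)*v)
        = ((c4*Fm*Fam)*(c5*Fmd*Fam))*((2^d*2^m)*(Fn^2*Fk^2*v)*((Fa⁻¹*Fa)*(Fnd⁻¹*Fnd))) := by
          ring
      _ = (Fa*Fnd)*((2^d*2^m)*(Fn^2*Fk^2*v)*(1*1)) := by rw [E4, E5, hA, hN]
      _ = (2^d*2^m) * (Fk^2*Fn^2*(Fa*Fnd)*v) := by ring
  linear_combination L - Rr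

lemma gsum (p n d : ℕ) (hp : p.Prime) (h2n : 2*n+1 = p) (hdn : d ≤ n)
    (hodd : (n - d) % 2 = 1) :
    ∑ m ∈ range ((n-d)+1),
      (2:ZMod p)^m * ((n-d).choose m : ZMod p) * ((n+d).choose (m+2*d) : ZMod p) = 0 := by
  set K := ZMod p
  set a := n - d with ha
  have step : ∀ m ∈ range (a+1),
      (2:K)^m * ((a.choose m : K)) * ((n+d).choose (m+2*d) : K)
      = -(((a.choose m : K)) * (-2)^m * ((2*a - m).choose a : K)) := by
    intro m hm
    have hm' : m ≤ a := Nat.lt_succ_iff.mp (Finset.mem_range.mp hm)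
    have h1 : (n+d).choose (m+2*d) = (p-1-a).choose (a-m) := by
      rw [show n+d = p-1-a by omega, show m+2*d = (p-1-a) - (a-m) by omega]
      exact Nat.choose_symm (by omega)
    have h2 := choose_neg p hp a (a-m) (by omega)
    have h3 : (a+(a-m)).choose (a-m) = (2*a-m).choose a := by
      rw [show a+(a-m) = 2*a-m by omega, show a - m = (2*a-m) - a by omega]
      exact Nat.choose_symm (by omega)
    rw [h1, h2, h3]
    rcases Nat.even_or_odd m with he | ho
    · have h4 : Odd (a - m) := by
        rw [Nat.odd_iff]
        rw [Nat.even_iff] at he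
        omega
      rw [h4.neg_one_pow, he.neg_pow]
      ring
    · have h4 : Even (a - m) := by
        rw [Nat.even_iff]
        rw [Nat.odd_iff] at ho
        omega
      rw [h4.neg_one_pow, ho.neg_pow]
      ring
  rw [Finset.sum_congr rfl step, Finset.sum_neg_distrib]
  have hint := congrArg (Int.cast : ℤ → K) (intD a hodd)
  push_cast +zetaDelta at hint
  rw [hint, neg_zero]


/-- Theorem 1.3(ii), congruence (1.7): for an odd prime `p` and `d ∈ {0, ..., (p-1)/2}`
with `d ≡ (p+1)/2 (mod 2)`, we have
`∑_{k=0}^{(p-1)/2} C(2k,k) C(2k,k+d) / 8^k ≡ 0 (mod p)`. -/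
theorem stmt_5 (p : ℕ) (hp : p.Prime) (hodd : Odd p) (d : ℕ) (hd : d ≤ (p - 1) / 2)
    (hpar : d % 2 = ((p + 1) / 2) % 2) :
    (∑ k ∈ Finset.range ((p - 1) / 2 + 1),
        (Nat.choose (2 * k) k * Nat.choose (2 * k) (k + d) : ZMod p) *
          ((8 : ZMod p)⁻¹) ^ k) = 0 := by
  haveI : Fact p.Prime := ⟨hp⟩
  obtain ⟨c, hc⟩ := hodd
  have hp2 : 2 ≤ p := hp.two_le
  set n := (p-1)/2 with hn
  have h2n : 2*n+1 = p := by omega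
  have hdn : d ≤ n := hd
  have hodd' : (n - d) % 2 = 1 := by
    have h1 : (p+1)/2 = n+1 := by omega
    rw [h1] at hpar
    omega
  rw [Finset.range_eq_Ico, ← Finset.sum_Ico_consecutive _ (Nat.zero_le d)
    (by omega : d ≤ n+1)]
  have first : ∑ k ∈ Finset.Ico 0 d,
      (Nat.choose (2 * k) k * Nat.choose (2 * k) (k + d) : ZMod p) *
        ((8 : ZMod p)⁻¹) ^ k = 0 := by
    refine Finset.sum_eq_zero fun k hk => ?_
    have hkd : k < d := (Finset.mem_Ico.mp hk).2
    rw [Nat.choose_eq_zero_of_lt (by omega : 2*k < k+d)]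
    simp
  rw [first, zero_add, Finset.sum_Ico_eq_sum_range,
    show n+1-d = (n-d)+1 by omega]
  have step : ∀ m ∈ range ((n-d)+1),
      (Nat.choose (2 * (d+m)) (d+m) * Nat.choose (2 * (d+m)) ((d+m) + d) : ZMod p) *
        ((8 : ZMod p)⁻¹) ^ (d+m)
      = (2^d * ((n.factorial : ZMod p))^2 * (((n-d).factorial : ZMod p))⁻¹
          * (((n+d).factorial : ZMod p))⁻¹)
        * (2^m * ((n-d).choose m : ZMod p) * ((n+d).choose (m + 2*d) : ZMod p)) := by
    intro m hm
    have hm' : m ≤ n - d := Nat.lt_succ_iff.mp (Finset.mem_range.mp hm)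
    have := term_eq p n d m hp h2n hdn hm'
    push_cast at this ⊢
    convert this using 2
  rw [Finset.sum_congr rfl step, ← Finset.mul_sum,
    gsum p n d hp h2n hdn hodd', mul_zero]
end

section
/- Let p > 3 be a prime. Then for every p-adic integer x, p² divides Σ_{k=0}^{p-1} C(4k,2k)·C(2k,k)·64^{-k}·(x^k − (-2/p)·(1−x)^k) in the ring of p-adic integers, where (-2/p) is the Legendre symbol. -/
open Finset

namespace Stmt10

/-- central binomial step -/
lemma cb (n : ℕ) : (n+1) * Nat.choose (2*n+2) (n+1) = 2*(2*n+1) * Nat.choose (2*n) n := by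
  have h1 : Nat.choose (2*n+2) (n+1) = Nat.choose (2*n+1) n + Nat.choose (2*n+1) (n+1) := by
    have := Nat.choose_succ_succ (2*n+1) n
    simpa [show 2*n+1+1 = 2*n+2 by ring] using this
  have h2 : Nat.choose (2*n+1) (n+1) = Nat.choose (2*n+1) n := by
    have := Nat.choose_symm (n := 2*n+1) (k := n+1) (by omega)
    simpa [show 2*n+1-(n+1) = n by omega] using this.symm
  have h3 : (2*n+1) * Nat.choose (2*n) n = (n+1) * Nat.choose (2*n+1) (n+1) := by
    have := Nat.add_one_mul_choose_eq (2*n) n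
    simpa [Nat.succ_eq_add_one, mul_comm] using this
  calc (n+1) * Nat.choose (2*n+2) (n+1) = 2 * ((n+1) * Nat.choose (2*n+1) (n+1)) := by
        rw [h1, h2]; ring
    _ = 2*(2*n+1) * Nat.choose (2*n) n := by rw [← h3]; ring

lemma quad (k : ℕ) : (2*k+1)*(2*k+2) * Nat.choose (4*k+4) (2*k+2) =
    4*((4*k+1)*(4*k+3)) * Nat.choose (4*k) (2*k) := by
  have h1 := cb (2*k+1)  -- (2k+2) * C(4k+4, 2k+2) = 2(4k+3) C(4k+2, 2k+1)
  have h2 := cb (2*k)    -- (2k+1) * C(4k+2, 2k+1) = 2(4k+1) C(4k, 2k)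
  have h1' : (2*k+2) * Nat.choose (4*k+4) (2*k+2) = 2*(4*k+3) * Nat.choose (4*k+2) (2*k+1) := by
    simpa [show 2*(2*k+1)+2 = 4*k+4 from by ring, show 2*(2*k+1) = 4*k+2 from by ring,
      show 2*k+1+1 = 2*k+2 from by ring, show 2*(2*k+1)+1 = 4*k+3 from by ring] using cb (2*k+1)
  have h2' : (2*k+1) * Nat.choose (4*k+2) (2*k+1) = 2*(4*k+1) * Nat.choose (4*k) (2*k) := by
    simpa [show 2*(2*k)+2 = 4*k+2 from by ring, show 2*(2*k) = 4*k from by ring,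
      show 2*(2*k)+1 = 4*k+1 from by ring] using cb (2*k)
  calc (2*k+1)*(2*k+2) * Nat.choose (4*k+4) (2*k+2)
      = (2*k+1) * ((2*k+2) * Nat.choose (4*k+4) (2*k+2)) := by ring
    _ = (2*k+1) * (2*(4*k+3) * Nat.choose (4*k+2) (2*k+1)) := by rw [h1']
    _ = 2*(4*k+3) * ((2*k+1) * Nat.choose (4*k+2) (2*k+1)) := by ring
    _ = 2*(4*k+3) * (2*(4*k+1) * Nat.choose (4*k) (2*k)) := by rw [h2']
    _ = 4*((4*k+1)*(4*k+3)) * Nat.choose (4*k) (2*k) := by ring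

lemma nat1 (k : ℕ) : 16*(k+1)^2 * (Nat.choose (4*(k+1)) (2*(k+1)) * Nat.choose (2*(k+1)) (k+1)) =
    64*((4*k+1)*(4*k+3)) * (Nat.choose (4*k) (2*k) * Nat.choose (2*k) k) := by
  have e1 : 4*(k+1) = 4*k+4 := by ring
  have e2 : 2*(k+1) = 2*k+2 := by ring
  rw [e1, e2]
  have h1 := cb k        -- (k+1) C(2k+2,k+1) = 2(2k+1) C(2k,k)
  have h2 := quad k
  calc 16*(k+1)^2 * (Nat.choose (4*k+4) (2*k+2) * Nat.choose (2*k+2) (k+1))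
      = 16*(k+1) * Nat.choose (4*k+4) (2*k+2) * ((k+1) * Nat.choose (2*k+2) (k+1)) := by ring
    _ = 16*(k+1) * Nat.choose (4*k+4) (2*k+2) * (2*(2*k+1) * Nat.choose (2*k) k) := by rw [h1]
    _ = 16 * ((2*k+1)*(2*k+2) * Nat.choose (4*k+4) (2*k+2)) * Nat.choose (2*k) k := by ring
    _ = 16 * (4*((4*k+1)*(4*k+3)) * Nat.choose (4*k) (2*k)) * Nat.choose (2*k) k := by rw [h2]
    _ = 64*((4*k+1)*(4*k+3)) * (Nat.choose (4*k) (2*k) * Nat.choose (2*k) k) := by ring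

/-- j * C(j-1, k) = (k+1) * C(j, k+1) -/
lemma ne1 (j k : ℕ) : j * Nat.choose (j-1) k = (k+1) * Nat.choose j (k+1) := by
  cases j with
  | zero => simp
  | succ m =>
    have := Nat.add_one_mul_choose_eq m k
    simpa [Nat.succ_eq_add_one, mul_comm] using this

/-- ℤ version of choose_succ_right_eq -/
lemma zcsr (j k : ℕ) : (Nat.choose j (k+1) : ℤ) * (k+1) = (Nat.choose j k : ℤ) * ((j:ℤ) - k) := by
  rcases le_or_gt k j with h | h
  · have := Nat.choose_succ_right_eq j k
    have hcast := congrArg (fun t : ℕ => (t : ℤ)) this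
    push_cast [Nat.cast_sub h] at hcast
    linarith
  · rw [Nat.choose_eq_zero_of_lt h, Nat.choose_eq_zero_of_lt (by omega)]
    simp

/-- key per-term identity for the ODE computation -/
lemma zsummand (j k : ℕ) :
    (16*((k:ℤ)+1)^2 * Nat.choose j (k+1) + (4*k+1)*(4*k+3) * Nat.choose j k : ℤ) =
    (4*j+1)*(4*j+3) * Nat.choose j k - 16*(j:ℤ)^2 * Nat.choose (j-1) k := by
  have h1 := zcsr j k
  have h2 : (j:ℤ) * Nat.choose (j-1) k = ((k:ℤ)+1) * Nat.choose j (k+1) := by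
    have := congrArg (fun t : ℕ => (t : ℤ)) (ne1 j k)
    push_cast at this; linarith
  linear_combination 16*(j:ℤ)*h2 + 16*((j:ℤ)+(k:ℤ)+1)*h1

/-- delta identity: alternating binomial transform is involutive -/
lemma delta (N m : ℕ) :
    ∑ k ∈ range (N+1), (-1:ℤ)^k * Nat.choose N k * Nat.choose k m
      = if m = N then (-1:ℤ)^N else 0 := by
  rcases le_or_gt m N with hm | hm
  · -- restrict to k ≥ m, reindex
    have hsub : ∑ k ∈ range (N+1), (-1:ℤ)^k * Nat.choose N k * Nat.choose k m
        = ∑ k ∈ Ico m (N+1), (-1:ℤ)^k * Nat.choose N k * Nat.choose k m := by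
      refine (Finset.sum_subset (by intro a ha; simp at ha ⊢; omega) ?_).symm
      intro k hk hk2
      simp only [mem_range] at hk
      simp only [mem_Ico, not_and, not_lt] at hk2
      have : k < m := by omega
      rw [Nat.choose_eq_zero_of_lt this]; ring
    rw [hsub, Finset.sum_Ico_eq_sum_range]
    have hNm : N + 1 - m = (N - m) + 1 := by omega
    rw [hNm]
    have hterm : ∀ i ∈ range ((N-m)+1),
        (-1:ℤ)^(m+i) * Nat.choose N (m+i) * Nat.choose (m+i) m
        = ((-1:ℤ)^m * Nat.choose N m) * ((-1:ℤ)^i * Nat.choose (N-m) i) := by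
      intro i hi
      simp only [mem_range] at hi
      have htri := Nat.choose_mul (n := N) (k := m+i) (s := m) (by omega)
      have : Nat.choose N (m+i) * Nat.choose (m+i) m = Nat.choose N m * Nat.choose (N-m) i := by
        simpa [Nat.add_sub_cancel_left] using htri
      have hcast := congrArg (fun t : ℕ => (t : ℤ)) this
      push_cast at hcast
      calc (-1:ℤ)^(m+i) * Nat.choose N (m+i) * Nat.choose (m+i) m
          = (-1:ℤ)^m * (-1:ℤ)^i * (Nat.choose N (m+i) * Nat.choose (m+i) m) := by
            rw [pow_add]; ring
        _ = (-1:ℤ)^m * (-1:ℤ)^i * (Nat.choose N m * Nat.choose (N-m) i) := by rw [hcast]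
        _ = ((-1:ℤ)^m * Nat.choose N m) * ((-1:ℤ)^i * Nat.choose (N-m) i) := by ring
    rw [Finset.sum_congr rfl hterm, ← Finset.mul_sum, Int.alternating_sum_range_choose]
    rcases eq_or_ne m N with h | h
    · simp [h, Nat.sub_self]
    · have : N - m ≠ 0 := by omega
      simp [this, h]
  · -- m > N : all terms vanish
    have : ∀ k ∈ range (N+1), (-1:ℤ)^k * Nat.choose N k * Nat.choose k m = 0 := by
      intro k hk
      simp only [mem_range] at hk
      rw [Nat.choose_eq_zero_of_lt (show k < m by omega)]; ring
    rw [Finset.sum_eq_zero this, if_neg (by omega)]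

/-- Legendre polynomial at -1 : ∑ (-1)^k C(n,k) C(n+k,k) = (-1)^n -/
lemma sum1 (n : ℕ) :
    ∑ k ∈ range (n+1), (-1:ℤ)^k * Nat.choose n k * Nat.choose (n+k) k = (-1:ℤ)^n := by
  have hsymm : ∀ k, Nat.choose (n+k) k = Nat.choose (n+k) n := by
    intro k
    have := Nat.choose_symm (n := n+k) (k := k) (by omega)
    simpa [Nat.add_sub_cancel] using this.symm
  have hvdm : ∀ k, (Nat.choose (n+k) n : ℤ)
      = ∑ i ∈ range (n+1), (Nat.choose n i : ℤ) * Nat.choose k (n-i) := by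
    intro k
    have := Nat.add_choose_eq n k n
    rw [Finset.Nat.sum_antidiagonal_eq_sum_range_succ_mk] at this
    exact_mod_cast congrArg (Nat.cast : ℕ → ℤ) this
  calc ∑ k ∈ range (n+1), (-1:ℤ)^k * Nat.choose n k * Nat.choose (n+k) k
      = ∑ k ∈ range (n+1), ∑ i ∈ range (n+1),
          (Nat.choose n i : ℤ) * ((-1:ℤ)^k * Nat.choose n k * Nat.choose k (n-i)) := by
        refine Finset.sum_congr rfl fun k _ => ?_
        rw [hsymm k, hvdm k, Finset.mul_sum]
        refine Finset.sum_congr rfl fun i _ => by ring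
    _ = ∑ i ∈ range (n+1), (Nat.choose n i : ℤ) *
          (∑ k ∈ range (n+1), (-1:ℤ)^k * Nat.choose n k * Nat.choose k (n-i)) := by
        rw [Finset.sum_comm]
        refine Finset.sum_congr rfl fun i _ => by rw [Finset.mul_sum]
    _ = ∑ i ∈ range (n+1), (Nat.choose n i : ℤ) * (if n - i = n then (-1:ℤ)^n else 0) := by
        refine Finset.sum_congr rfl fun i _ => by rw [delta]
    _ = (-1:ℤ)^n := by
        rw [Finset.sum_eq_single 0]
        · simp
        · intro i hi hne
          simp only [mem_range] at hi
          rw [if_neg (by omega)]; ring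
        · intro h; simp at h



variable {p : ℕ} [hp : Fact p.Prime]

/-- not divisible implies unit in ℤ_[p] -/
lemma unit_of_not_dvd {z : ℤ_[p]} (h : ¬ ((p:ℤ_[p]) ∣ z)) : IsUnit z := by
  rw [PadicInt.isUnit_iff]
  have h1 : ¬ ‖z‖ < 1 := fun hc => h ((PadicInt.norm_lt_one_iff_dvd z).mp hc)
  exact le_antisymm (PadicInt.norm_le_one z) (not_lt.mp h1)

lemma dvd_iff_toZMod_eq_zero {z : ℤ_[p]} : (p:ℤ_[p]) ∣ z ↔ PadicInt.toZMod z = 0 := by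
  constructor
  · intro h
    have : z ∈ Ideal.span {(p:ℤ_[p])} := Ideal.mem_span_singleton.mpr h
    rw [← PadicInt.maximalIdeal_eq_span_p, ← PadicInt.ker_toZMod] at this
    exact this
  · intro h
    have : z ∈ RingHom.ker (PadicInt.toZMod : ℤ_[p] →+* ZMod p) := h
    rw [PadicInt.ker_toZMod, PadicInt.maximalIdeal_eq_span_p] at this
    exact Ideal.mem_span_singleton.mp this

lemma isUnit_natCast_of_not_dvd {n : ℕ} (h : ¬ p ∣ n) : IsUnit ((n:ℕ) : ℤ_[p]) := by
  apply unit_of_not_dvd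
  intro hc
  rw [dvd_iff_toZMod_eq_zero] at hc
  rw [map_natCast] at hc
  exact h ((ZMod.natCast_eq_zero_iff n p).mp hc)


noncomputable def A (p : ℕ) [Fact p.Prime] (k : ℕ) : ℤ_[p] :=
  (Nat.choose (4*k) (2*k) : ℤ_[p]) * (Nat.choose (2*k) k : ℤ_[p]) * (Ring.inverse (64:ℤ_[p]))^k

noncomputable def g (p : ℕ) [Fact p.Prime] (k : ℕ) : ℤ_[p] :=
  (-1)^k * ∑ j ∈ range p, (Nat.choose j k : ℤ_[p]) * A p j

lemma isUnit64 (hp3 : 3 < p) : IsUnit (64 : ℤ_[p]) := by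
  have : ((64:ℕ) : ℤ_[p]) = (64 : ℤ_[p]) := by norm_num
  rw [← this]
  apply isUnit_natCast_of_not_dvd
  intro hc
  have h2 : p ∣ 2^6 := by norm_num at hc ⊢; exact hc
  have := Nat.le_of_dvd (by norm_num) (Nat.Prime.dvd_of_dvd_pow hp.out h2)
  omega

lemma hw (hp3 : 3 < p) : (64:ℤ_[p]) * Ring.inverse (64:ℤ_[p]) = 1 :=
  Ring.mul_inverse_cancel _ (isUnit64 hp3)

lemma A_zero : A p 0 = 1 := by simp [A]

lemma Arec (hp3 : 3 < p) (k : ℕ) :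
    (16:ℤ_[p])*((k:ℤ_[p])+1)^2 * A p (k+1) = ((4*k+1)*(4*k+3) : ℤ_[p]) * A p k := by
  have hq := congrArg (fun t : ℕ => (t : ℤ_[p])) (nat1 k)
  push_cast at hq
  unfold A
  set w := Ring.inverse (64:ℤ_[p]) with hwdef
  have h64 : (64:ℤ_[p]) * w = 1 := hw hp3
  calc (16:ℤ_[p])*((k:ℤ_[p])+1)^2 *
        ((Nat.choose (4*(k+1)) (2*(k+1)) : ℤ_[p]) * (Nat.choose (2*(k+1)) (k+1) : ℤ_[p]) * w^(k+1))
      = (16*((k:ℤ_[p])+1)^2 * ((Nat.choose (4*(k+1)) (2*(k+1)) : ℤ_[p]) *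
          (Nat.choose (2*(k+1)) (k+1) : ℤ_[p]))) * w^(k+1) := by ring
    _ = (64*(((4*k:ℤ_[p])+1)*((4*k:ℤ_[p])+3)) * ((Nat.choose (4*k) (2*k) : ℤ_[p]) *
          (Nat.choose (2*k) k : ℤ_[p]))) * w^(k+1) := by rw [hq]
    _ = (((4*k:ℤ_[p])+1)*((4*k:ℤ_[p])+3)) * ((Nat.choose (4*k) (2*k) : ℤ_[p]) *
          (Nat.choose (2*k) k : ℤ_[p]) * w^k) * ((64:ℤ_[p]) * w) := by ring
    _ = ((4*k+1)*(4*k+3) : ℤ_[p]) * ((Nat.choose (4*k) (2*k) : ℤ_[p]) *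
          (Nat.choose (2*k) k : ℤ_[p]) * w^k) := by rw [h64]; push_cast; ring

lemma grec (hp3 : 3 < p) (k : ℕ) :
    (16:ℤ_[p])*((k:ℤ_[p])+1)^2 * g p (k+1) - ((4*k+1)*(4*k+3) : ℤ_[p]) * g p k
      = (-1:ℤ_[p])^(k+1) * (16*(p:ℤ_[p])^2) * (Nat.choose (p-1) k : ℤ_[p]) * A p p := by
  unfold g
  -- F j = 16 j^2 C(j-1,k) A j
  set F : ℕ → ℤ_[p] := fun j => 16*(j:ℤ_[p])^2 * (Nat.choose (j-1) k : ℤ_[p]) * A p j with hF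
  have hstep : ∀ j : ℕ, ((4*(j:ℤ_[p])+1)*(4*(j:ℤ_[p])+3) * (Nat.choose j k : ℤ_[p])
      - 16*(j:ℤ_[p])^2 * (Nat.choose (j-1) k : ℤ_[p])) * A p j = F (j+1) - F j := by
    intro j
    have harec := Arec hp3 j
    have : F (j+1) = 16*((j:ℤ_[p])+1)^2 * (Nat.choose j k : ℤ_[p]) * A p (j+1) := by
      simp only [hF, Nat.add_sub_cancel]
      push_cast
      ring
    rw [this]
    have : 16*((j:ℤ_[p])+1)^2 * (Nat.choose j k : ℤ_[p]) * A p (j+1)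
        = (Nat.choose j k : ℤ_[p]) * ((16:ℤ_[p])*((j:ℤ_[p])+1)^2 * A p (j+1)) := by ring
    rw [this, harec]
    simp only [hF]
    push_cast
    ring
  have hsummand : ∀ j : ℕ, (16*((k:ℤ_[p])+1)^2 * (Nat.choose j (k+1) : ℤ_[p])
      + ((4*k+1)*(4*k+3) : ℤ_[p]) * (Nat.choose j k : ℤ_[p])) * A p j = F (j+1) - F j := by
    intro j
    have hz := congrArg (fun t : ℤ => (t : ℤ_[p])) (zsummand j k)
    push_cast at hz
    rw [← hstep j]
    linear_combination (A p j) * hz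
  have htel : ∑ j ∈ range p, (F (j+1) - F j) = F p - F 0 := Finset.sum_range_sub F p
  have hF0 : F 0 = 0 := by simp [hF]
  have hFp : F p = 16*(p:ℤ_[p])^2 * (Nat.choose (p-1) k : ℤ_[p]) * A p p := rfl
  have hmain : ∑ j ∈ range p, (16*((k:ℤ_[p])+1)^2 * (Nat.choose j (k+1) : ℤ_[p])
      + ((4*k+1)*(4*k+3) : ℤ_[p]) * (Nat.choose j k : ℤ_[p])) * A p j
      = 16*(p:ℤ_[p])^2 * (Nat.choose (p-1) k : ℤ_[p]) * A p p := by
    rw [Finset.sum_congr rfl (fun j _ => hsummand j), htel, hF0, hFp, sub_zero]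
  calc (16:ℤ_[p])*((k:ℤ_[p])+1)^2 * ((-1)^(k+1) * ∑ j ∈ range p, (Nat.choose j (k+1) : ℤ_[p]) * A p j)
        - ((4*k+1)*(4*k+3) : ℤ_[p]) * ((-1)^k * ∑ j ∈ range p, (Nat.choose j k : ℤ_[p]) * A p j)
      = (-1:ℤ_[p])^(k+1) * ∑ j ∈ range p, (16*((k:ℤ_[p])+1)^2 * (Nat.choose j (k+1) : ℤ_[p])
          + ((4*k+1)*(4*k+3) : ℤ_[p]) * (Nat.choose j k : ℤ_[p])) * A p j := by
        simp only [Finset.mul_sum]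
        rw [← Finset.sum_sub_distrib]
        refine Finset.sum_congr rfl fun j _ => ?_
        have hsgn : (-1:ℤ_[p])^k = -(-1:ℤ_[p])^(k+1) := by rw [pow_succ]; ring
        rw [hsgn]; ring
    _ = (-1:ℤ_[p])^(k+1) * (16*(p:ℤ_[p])^2) * (Nat.choose (p-1) k : ℤ_[p]) * A p p := by
        rw [hmain]; ring


lemma isUnit_coeff (hp3 : 3 < p) {k : ℕ} (hk : k + 1 < p) :
    IsUnit ((16:ℤ_[p])*((k:ℤ_[p])+1)^2) := by
  have : ((16*(k+1)^2 : ℕ) : ℤ_[p]) = (16:ℤ_[p])*((k:ℤ_[p])+1)^2 := by push_cast; ring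
  rw [← this]
  apply isUnit_natCast_of_not_dvd
  intro hc
  rcases (Nat.Prime.dvd_mul hp.out).mp hc with h | h
  · have h2 : p ∣ 2^4 := by norm_num at h ⊢; exact h
    have := Nat.le_of_dvd (by norm_num) (Nat.Prime.dvd_of_dvd_pow hp.out h2)
    omega
  · have := Nat.Prime.dvd_of_dvd_pow hp.out h
    have := Nat.le_of_dvd (by omega) this
    omega

lemma prop (hp3 : 3 < p) : ∀ k, k < p → (p:ℤ_[p])^2 ∣ g p k - A p k * g p 0 := by
  intro k
  induction k with
  | zero => intro _; rw [A_zero, one_mul, sub_self]; exact dvd_zero _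
  | succ k ih =>
    intro hk1
    have hk : k < p := by omega
    have IH := ih hk
    have h1 : (p:ℤ_[p])^2 ∣ (16:ℤ_[p])*((k:ℤ_[p])+1)^2 * g p (k+1) - ((4*k+1)*(4*k+3) : ℤ_[p]) * g p k := by
      rw [grec hp3 k]
      exact ⟨(-1:ℤ_[p])^(k+1) * 16 * (Nat.choose (p-1) k : ℤ_[p]) * A p p, by ring⟩
    have h2 : (p:ℤ_[p])^2 ∣ ((4*k+1)*(4*k+3) : ℤ_[p]) * (g p k - A p k * g p 0) := IH.mul_left _
    have e : (16:ℤ_[p])*((k:ℤ_[p])+1)^2 * (g p (k+1) - A p (k+1) * g p 0)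
        = ((16:ℤ_[p])*((k:ℤ_[p])+1)^2 * g p (k+1) - ((4*k+1)*(4*k+3) : ℤ_[p]) * g p k)
          + ((4*k+1)*(4*k+3) : ℤ_[p]) * (g p k - A p k * g p 0) := by
      linear_combination (-(g p 0)) * (Arec hp3 k)
    have h3 : (p:ℤ_[p])^2 ∣ (16:ℤ_[p])*((k:ℤ_[p])+1)^2 * (g p (k+1) - A p (k+1) * g p 0) := by
      rw [e]; exact dvd_add h1 h2
    exact ((isUnit_coeff hp3 hk1).dvd_mul_left).mp h3

/-- the inverse binomial transform: A m = (-1)^m ∑ C(k,m) g k, for m < p -/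
lemma invoA (m : ℕ) (hm : m < p) :
    A p m = (-1:ℤ_[p])^m * ∑ k ∈ range p, (Nat.choose k m : ℤ_[p]) * g p k := by
  unfold g
  have hswap : ∑ k ∈ range p, (Nat.choose k m : ℤ_[p]) *
      ((-1:ℤ_[p])^k * ∑ j ∈ range p, (Nat.choose j k : ℤ_[p]) * A p j)
      = ∑ j ∈ range p, (∑ k ∈ range p, (-1:ℤ_[p])^k * (Nat.choose k m : ℤ_[p]) *
          (Nat.choose j k : ℤ_[p])) * A p j := by
    simp only [Finset.mul_sum]
    rw [Finset.sum_comm]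
    refine Finset.sum_congr rfl fun j _ => ?_
    rw [Finset.sum_mul]
    refine Finset.sum_congr rfl fun k _ => by ring
  rw [hswap]
  have hinner : ∀ j ∈ range p, (∑ k ∈ range p, (-1:ℤ_[p])^k * (Nat.choose k m : ℤ_[p]) *
      (Nat.choose j k : ℤ_[p])) * A p j
      = ((-1:ℤ_[p])^m * if m = j then 1 else 0) * A p j := by
    intro j hj
    simp only [mem_range] at hj
    congr 1
    -- ∑_{k<p} (-1)^k C(k,m) C(j,k) ; restrict to k ≤ j
    have hres : ∑ k ∈ range p, (-1:ℤ_[p])^k * (Nat.choose k m : ℤ_[p]) * (Nat.choose j k : ℤ_[p])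
        = ∑ k ∈ range (j+1), (-1:ℤ_[p])^k * (Nat.choose k m : ℤ_[p]) * (Nat.choose j k : ℤ_[p]) := by
      refine (Finset.sum_subset (by intro a ha; simp at ha ⊢; omega) ?_).symm
      intro k hk hk2
      simp only [mem_range] at hk hk2
      rw [Nat.choose_eq_zero_of_lt (show j < k by omega)]
      ring
    rw [hres]
    have hcast := congrArg (fun t : ℤ => (t : ℤ_[p])) (delta j m)
    push_cast at hcast
    have : ∑ k ∈ range (j+1), (-1:ℤ_[p])^k * (Nat.choose k m : ℤ_[p]) * (Nat.choose j k : ℤ_[p])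
        = ∑ k ∈ range (j+1), (-1:ℤ_[p])^k * (Nat.choose j k : ℤ_[p]) * (Nat.choose k m : ℤ_[p]) := by
      refine Finset.sum_congr rfl fun k _ => by ring
    rw [this, hcast]
    by_cases h : m = j
    · subst h; simp
    · simp [h]
  rw [Finset.sum_congr rfl hinner]
  have hsingle : ∑ j ∈ range p, ((-1:ℤ_[p])^m * if m = j then 1 else 0) * A p j
      = (-1:ℤ_[p])^m * A p m := by
    rw [Finset.sum_eq_single m]
    · simp
    · intro j hj hne; simp [Ne.symm hne]
    · intro h; exact absurd (mem_range.mpr hm) h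
  rw [hsingle, ← mul_assoc, ← pow_add, Even.neg_one_pow ⟨m, rfl⟩, one_mul]

lemma Amgm (hp3 : 3 < p) (m : ℕ) (hm : m < p) :
    (p:ℤ_[p])^2 ∣ A p m - g p 0 * g p m := by
  have hgm2 : g p m = (-1:ℤ_[p])^m * ∑ k ∈ range p, (Nat.choose k m : ℤ_[p]) * A p k := rfl
  have key : A p m - g p 0 * g p m
      = ∑ k ∈ range p, ((-1:ℤ_[p])^m * (Nat.choose k m : ℤ_[p])) * (g p k - A p k * g p 0) := by
    rw [invoA m hm, hgm2]
    simp only [Finset.mul_sum]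
    rw [← Finset.sum_sub_distrib]
    refine Finset.sum_congr rfl fun k _ => by ring
  rw [key]
  exact Finset.dvd_sum fun k hk => ((prop hp3 k (mem_range.mp hk)).mul_left _)

lemma sigma_sq (hp3 : 3 < p) : (p:ℤ_[p])^2 ∣ 1 - g p 0 * g p 0 := by
  have := Amgm hp3 0 (by omega)
  rwa [A_zero] at this



/-- product formula -/
lemma prodn (k : ℕ) : Nat.choose (4*k) (2*k) * Nat.choose (2*k) k * (Nat.factorial k)^2
    = ∏ i ∈ range k, (4*((4*i+1)*(4*i+3))) := by
  induction k with
  | zero => simp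
  | succ k ih =>
    apply Nat.eq_of_mul_eq_mul_left (show 0 < 16 by norm_num)
    calc 16 * (Nat.choose (4*(k+1)) (2*(k+1)) * Nat.choose (2*(k+1)) (k+1) * (Nat.factorial (k+1))^2)
        = (16*(k+1)^2 * (Nat.choose (4*(k+1)) (2*(k+1)) * Nat.choose (2*(k+1)) (k+1)))
            * (Nat.factorial k)^2 := by rw [Nat.factorial_succ]; ring
      _ = (64*((4*k+1)*(4*k+3)) * (Nat.choose (4*k) (2*k) * Nat.choose (2*k) k))
            * (Nat.factorial k)^2 := by rw [nat1]
      _ = 64*((4*k+1)*(4*k+3)) * (Nat.choose (4*k) (2*k) * Nat.choose (2*k) k * (Nat.factorial k)^2) := by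
            ring
      _ = 64*((4*k+1)*(4*k+3)) * ∏ i ∈ range k, (4*((4*i+1)*(4*i+3))) := by rw [ih]
      _ = 16 * ∏ i ∈ range (k+1), (4*((4*i+1)*(4*i+3))) := by
            rw [Finset.prod_range_succ]; ring

lemma q1 (n0 : ℕ) (hn0 : n0 < p) (k : ℕ) :
    ((Nat.choose n0 k * Nat.factorial k : ℕ) : ZMod p)
      = ∏ i ∈ range k, ((n0 : ZMod p) - (i : ZMod p)) := by
  induction k with
  | zero => simp
  | succ k ih =>
    have hnat : Nat.choose n0 (k+1) * Nat.factorial (k+1)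
        = Nat.choose n0 k * Nat.factorial k * (n0 - k) := by
      rw [Nat.factorial_succ]
      calc Nat.choose n0 (k+1) * ((k+1) * Nat.factorial k)
          = (Nat.choose n0 (k+1) * (k+1)) * Nat.factorial k := by ring
        _ = (Nat.choose n0 k * (n0 - k)) * Nat.factorial k := by rw [Nat.choose_succ_right_eq]
        _ = Nat.choose n0 k * Nat.factorial k * (n0 - k) := by ring
    rcases le_or_gt k n0 with h | h
    · rw [hnat]
      push_cast [Nat.cast_sub h] at ih ⊢
      rw [Finset.prod_range_succ, ← ih]
    · -- n0 < k : both sides are zero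
      have h1 : Nat.choose n0 (k+1) = 0 := Nat.choose_eq_zero_of_lt (by omega)
      rw [h1]
      rw [Finset.prod_eq_zero (Finset.mem_range.mpr (show n0 < k+1 by omega))
        (by rw [sub_self])]
      simp

lemma q2 (n0 : ℕ) (k : ℕ) :
    ((Nat.choose (n0+k) k * Nat.factorial k : ℕ) : ZMod p)
      = ∏ i ∈ range k, ((n0 : ZMod p) + 1 + (i : ZMod p)) := by
  induction k with
  | zero => simp
  | succ k ih =>
    have hnat : Nat.choose (n0+(k+1)) (k+1) * Nat.factorial (k+1)
        = (n0+k+1) * (Nat.choose (n0+k) k * Nat.factorial k) := by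
      rw [Nat.factorial_succ, show n0+(k+1) = (n0+k)+1 by ring]
      calc Nat.choose ((n0+k)+1) (k+1) * ((k+1) * Nat.factorial k)
          = (Nat.choose ((n0+k)+1) (k+1) * (k+1)) * Nat.factorial k := by ring
        _ = ((n0+k+1) * Nat.choose (n0+k) k) * Nat.factorial k := by
              rw [← Nat.add_one_mul_choose_eq]
        _ = (n0+k+1) * (Nat.choose (n0+k) k * Nat.factorial k) := by ring
    rw [hnat]
    push_cast at ih ⊢
    rw [Finset.prod_range_succ, ← ih]
    ring

lemma phiA (hp3 : 3 < p) (n0 : ℕ) (hn0 : n0 < p) (h4 : p ∣ 4*n0+1) (k : ℕ) (hk : k < p) :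
    PadicInt.toZMod (A p k) = (-1:ZMod p)^k * (Nat.choose n0 k : ZMod p) * (Nat.choose (n0+k) k : ZMod p) := by
  have hfne : ((Nat.factorial k : ℕ) : ZMod p) ≠ 0 := by
    rw [Ne, ZMod.natCast_eq_zero_iff]
    intro hc
    have := (Nat.Prime.dvd_factorial hp.out).mp hc
    omega
  have h64ne : ((64 : ℕ) : ZMod p) ≠ 0 := by
    rw [Ne, ZMod.natCast_eq_zero_iff]
    intro hc
    have h2 : p ∣ 2^6 := by norm_num at hc ⊢; exact hc
    have := Nat.le_of_dvd (by norm_num) (Nat.Prime.dvd_of_dvd_pow hp.out h2)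
    omega
  have hcancel : (((Nat.factorial k : ℕ):ZMod p))^2 * ((64:ℕ):ZMod p)^k ≠ 0 :=
    mul_ne_zero (pow_ne_zero _ hfne) (pow_ne_zero _ h64ne)
  apply mul_right_cancel₀ hcancel
  -- left side
  set u : ZMod p := PadicInt.toZMod (Ring.inverse (64:ℤ_[p])) with hu
  have h64u : ((64:ℕ):ZMod p) * u = 1 := by
    have := congrArg (PadicInt.toZMod : ℤ_[p] →+* ZMod p) (hw hp3)
    rw [map_mul, map_one] at this
    rw [hu]
    have h64 : (PadicInt.toZMod (64:ℤ_[p]) : ZMod p) = ((64:ℕ):ZMod p) := by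
      rw [show (64:ℤ_[p]) = ((64:ℕ):ℤ_[p]) by norm_num, map_natCast]
    rw [← h64]
    exact this
  have hphiA : PadicInt.toZMod (A p k)
      = (Nat.choose (4*k) (2*k) : ZMod p) * (Nat.choose (2*k) k : ZMod p) * u^k := by
    unfold A
    rw [map_mul, map_mul, map_pow, map_natCast, map_natCast]
  have hlhs : PadicInt.toZMod (A p k) * ((((Nat.factorial k : ℕ)):ZMod p)^2 * ((64:ℕ):ZMod p)^k)
      = ((∏ i ∈ range k, (4*((4*i+1)*(4*i+3))) : ℕ) : ZMod p) := by
    rw [hphiA, ← prodn]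
    have : (Nat.choose (4*k) (2*k) : ZMod p) * (Nat.choose (2*k) k : ZMod p) * u^k *
        ((((Nat.factorial k : ℕ)):ZMod p)^2 * ((64:ℕ):ZMod p)^k)
        = ((Nat.choose (4*k) (2*k) : ZMod p) * (Nat.choose (2*k) k : ZMod p) *
            (((Nat.factorial k : ℕ)):ZMod p)^2) * ((((64:ℕ):ZMod p)) * u)^k := by
      rw [mul_pow]; ring
    rw [this, h64u, one_pow, mul_one]
    push_cast
    ring
  rw [hlhs]
  -- right side
  have h4n0 : (4:ZMod p) * (n0 : ZMod p) + 1 = 0 := by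
    have : ((4*n0+1 : ℕ) : ZMod p) = 0 := (ZMod.natCast_eq_zero_iff _ _).mpr h4
    push_cast at this
    linear_combination this
  have hq1 := q1 (p := p) n0 hn0 k
  have hq2 := q2 (p := p) n0 k
  have hrhs : ((-1:ZMod p)^k * (Nat.choose n0 k : ZMod p) * (Nat.choose (n0+k) k : ZMod p)) *
      ((((Nat.factorial k : ℕ)):ZMod p)^2 * ((64:ℕ):ZMod p)^k)
      = ∏ i ∈ range k, ((4*((4*i+1)*(4*i+3)) : ℕ) : ZMod p) := by
    have e1 : ((-1:ZMod p)^k * (Nat.choose n0 k : ZMod p) * (Nat.choose (n0+k) k : ZMod p)) *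
        ((((Nat.factorial k : ℕ)):ZMod p)^2 * ((64:ℕ):ZMod p)^k)
        = (((Nat.choose n0 k * Nat.factorial k : ℕ) : ZMod p))
          * (((Nat.choose (n0+k) k * Nat.factorial k : ℕ) : ZMod p))
          * ((-1:ZMod p)^k * ((64:ℕ):ZMod p)^k) := by
      push_cast; ring
    rw [e1, hq1, hq2]
    rw [show ((-1:ZMod p)^k * ((64:ℕ):ZMod p)^k) = ∏ _i ∈ range k, ((-1:ZMod p)*64) from by
      rw [Finset.prod_const, mul_pow]; norm_num]
    rw [← Finset.prod_mul_distrib, ← Finset.prod_mul_distrib]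
    refine Finset.prod_congr rfl fun i _ => ?_
    push_cast
    linear_combination (-16*(n0:ZMod p) - 12) * h4n0
  rw [hrhs]
  push_cast
  ring


lemma phiSigma (hp3 : 3 < p) (n0 : ℕ) (hn0 : n0 < p) (h4 : p ∣ 4*n0+1) :
    PadicInt.toZMod (g p 0) = (-1:ZMod p)^n0 := by
  have hg0 : g p 0 = ∑ j ∈ range p, A p j := by
    unfold g; simp
  rw [hg0, map_sum]
  have hcongr : ∀ j ∈ range p, PadicInt.toZMod (A p j)
      = (-1:ZMod p)^j * (Nat.choose n0 j : ZMod p) * (Nat.choose (n0+j) j : ZMod p) := by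
    intro j hj
    exact phiA hp3 n0 hn0 h4 j (mem_range.mp hj)
  rw [Finset.sum_congr rfl hcongr]
  have hrestrict : ∑ j ∈ range p, ((-1:ZMod p)^j * (Nat.choose n0 j : ZMod p) *
      (Nat.choose (n0+j) j : ZMod p))
      = ∑ j ∈ range (n0+1), ((-1:ZMod p)^j * (Nat.choose n0 j : ZMod p) *
      (Nat.choose (n0+j) j : ZMod p)) := by
    refine (Finset.sum_subset (Finset.range_subset_range.mpr (by omega)) ?_).symm
    intro j hj hj2
    simp only [mem_range] at hj hj2
    rw [Nat.choose_eq_zero_of_lt (show n0 < j by omega)]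
    ring
  rw [hrestrict]
  have hcast := congrArg (fun t : ℤ => (t : ZMod p)) (sum1 n0)
  push_cast at hcast
  exact hcast

lemma n0spec (hp3 : 3 < p) : ∃ n0 : ℕ, n0 < p ∧ p ∣ 4*n0+1 ∧
    (jacobiSym (-2) p : ℤ) = (-1:ℤ)^n0 := by
  have hodd : p % 2 = 1 := Nat.odd_iff.mp (hp.out.odd_of_ne_two (by omega))
  have h8 : p % 8 = 1 ∨ p % 8 = 3 ∨ p % 8 = 5 ∨ p % 8 = 7 := by omega
  have hjac : jacobiSym (-2) p = ZMod.χ₈' (p : ZMod 8) := jacobiSym.at_neg_two (Nat.odd_iff.mpr hodd)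
  have hval := ZMod.χ₈'_nat_eq_if_mod_eight p
  refine ⟨if p % 4 = 1 then (p-1)/4 else (3*p-1)/4, ?_, ?_, ?_⟩
  · split <;> omega
  · split
    · next h => exact ⟨1, by omega⟩
    · next h => exact ⟨3, by omega⟩
  · rw [hjac, hval, if_neg (by omega)]
    rcases h8 with h | h | h | h
    · rw [if_pos (by omega)]
      have he : (if p % 4 = 1 then (p-1)/4 else (3*p-1)/4) % 2 = 0 := by split <;> omega
      exact (Even.neg_one_pow (Nat.even_iff.mpr he)).symm
    · rw [if_pos (by omega)]
      have he : (if p % 4 = 1 then (p-1)/4 else (3*p-1)/4) % 2 = 0 := by split <;> omega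
      exact (Even.neg_one_pow (Nat.even_iff.mpr he)).symm
    · rw [if_neg (by omega)]
      have he : (if p % 4 = 1 then (p-1)/4 else (3*p-1)/4) % 2 = 1 := by split <;> omega
      exact (Odd.neg_one_pow (Nat.odd_iff.mpr he)).symm
    · rw [if_neg (by omega)]
      have he : (if p % 4 = 1 then (p-1)/4 else (3*p-1)/4) % 2 = 1 := by split <;> omega
      exact (Odd.neg_one_pow (Nat.odd_iff.mpr he)).symm

lemma sign (hp3 : 3 < p) :
    (p:ℤ_[p])^2 ∣ g p 0 - ((jacobiSym (-2) p : ℤ) : ℤ_[p]) := by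
  obtain ⟨n0, hn0, h4, hjac⟩ := n0spec (p := p) hp3
  set χ : ℤ_[p] := ((jacobiSym (-2) p : ℤ) : ℤ_[p]) with hχ
  have hχval : χ = ((-1:ℤ)^n0 : ℤ_[p]) := by rw [hχ, hjac]; push_cast; ring
  have hχ2 : χ * χ = 1 := by
    rw [hχval]; push_cast
    rw [← pow_add]
    exact Even.neg_one_pow ⟨n0, rfl⟩
  have hφg : PadicInt.toZMod (g p 0) = (-1:ZMod p)^n0 := phiSigma hp3 n0 hn0 h4
  have hφχ : PadicInt.toZMod χ = (-1:ZMod p)^n0 := by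
    rw [hχval]
    push_cast
    rw [map_pow, map_neg, map_one]
  have hplus : ¬ ((p:ℤ_[p]) ∣ (g p 0 + χ)) := by
    intro hc
    rw [dvd_iff_toZMod_eq_zero] at hc
    rw [map_add, hφg, hφχ] at hc
    have h2 : (2:ZMod p) * (-1:ZMod p)^n0 = 0 := by linear_combination hc
    have hne : ((-1:ZMod p))^n0 ≠ 0 := by
      intro h0
      have hsq : ((-1:ZMod p))^n0 * ((-1:ZMod p))^n0 = 1 := by
        rw [← pow_add]; exact Even.neg_one_pow ⟨n0, rfl⟩
      rw [h0, mul_zero] at hsq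
      exact zero_ne_one hsq
    have h20 : (2:ZMod p) = 0 := by
      rcases mul_eq_zero.mp h2 with h | h
      · exact h
      · exact absurd h hne
    have : ((2:ℕ) : ZMod p) = 0 := by push_cast; exact h20
    have := (ZMod.natCast_eq_zero_iff 2 p).mp this
    have := Nat.le_of_dvd (by norm_num) this
    omega
  have hunit : IsUnit (g p 0 + χ) := unit_of_not_dvd hplus
  have hfac : (g p 0 - χ) * (g p 0 + χ) = -(1 - g p 0 * g p 0) := by
    linear_combination -hχ2
  have hdvd : (p:ℤ_[p])^2 ∣ (g p 0 - χ) * (g p 0 + χ) := by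
    rw [hfac]
    exact (sigma_sq hp3).neg_right
  exact (hunit.dvd_mul_right).mp hdvd


theorem main (hp3 : 3 < p) (x : ℤ_[p]) :
    (p : ℤ_[p]) ^ 2 ∣
      ∑ k ∈ Finset.range p,
        (Nat.choose (4 * k) (2 * k) : ℤ_[p]) * (Nat.choose (2 * k) k : ℤ_[p]) *
          (Ring.inverse (64 : ℤ_[p])) ^ k *
            (x ^ k - ((jacobiSym (-2) p : ℤ) : ℤ_[p]) * (1 - x) ^ k) := by
  set χ : ℤ_[p] := ((jacobiSym (-2) p : ℤ) : ℤ_[p]) with hχ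
  -- step 1: expand the sum
  have hexp : ∑ k ∈ Finset.range p,
      (Nat.choose (4 * k) (2 * k) : ℤ_[p]) * (Nat.choose (2 * k) k : ℤ_[p]) *
        (Ring.inverse (64 : ℤ_[p])) ^ k * (x ^ k - χ * (1 - x) ^ k)
      = (∑ k ∈ range p, A p k * x^k) - χ * ∑ k ∈ range p, A p k * (1-x)^k := by
    rw [Finset.mul_sum, ← Finset.sum_sub_distrib]
    refine Finset.sum_congr rfl fun k _ => ?_
    simp only [A]
    ring
  -- step 2: binomial expansion of (1-x)^k
  have h1 : ∀ k ∈ range p, A p k * (1-x)^k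
      = ∑ m ∈ range p, (Nat.choose k m : ℤ_[p]) * (-1)^m * x^m * A p k := by
    intro k hk
    have hb : (1 - x)^k = ∑ m ∈ range (k+1), (Nat.choose k m : ℤ_[p]) * (-1)^m * x^m := by
      have haux := add_pow (-x) 1 k
      rw [show (-x) + (1:ℤ_[p]) = 1 - x by ring] at haux
      rw [haux]
      refine Finset.sum_congr rfl fun m _ => ?_
      rw [one_pow, neg_pow]
      ring
    have hext : ∑ m ∈ range (k+1), (Nat.choose k m : ℤ_[p]) * (-1)^m * x^m
        = ∑ m ∈ range p, (Nat.choose k m : ℤ_[p]) * (-1)^m * x^m := by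
      refine Finset.sum_subset (Finset.range_subset_range.mpr (mem_range.mp hk)) ?_
      intro m hm hm2
      simp only [mem_range] at hm hm2
      rw [Nat.choose_eq_zero_of_lt (show k < m by omega)]
      ring
    rw [hb, hext, Finset.mul_sum]
    refine Finset.sum_congr rfl fun m _ => by ring
  have h2 : ∑ k ∈ range p, A p k * (1-x)^k = ∑ m ∈ range p, g p m * x^m := by
    rw [Finset.sum_congr rfl h1, Finset.sum_comm]
    refine Finset.sum_congr rfl fun m _ => ?_
    unfold g
    rw [Finset.mul_sum, Finset.sum_mul]
    refine Finset.sum_congr rfl fun k _ => by ring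
  rw [hexp, h2, Finset.mul_sum, ← Finset.sum_sub_distrib]
  have h3 : ∀ m ∈ range p, A p m * x^m - χ * (g p m * x^m) = (A p m - χ * g p m) * x^m := by
    intro m _; ring
  rw [Finset.sum_congr rfl h3]
  refine Finset.dvd_sum fun m hm => Dvd.dvd.mul_right ?_ _
  have e : A p m - χ * g p m = (A p m - g p 0 * g p m) + (g p 0 - χ) * g p m := by ring
  rw [e]
  exact dvd_add (Amgm hp3 m (mem_range.mp hm)) ((sign hp3).mul_right _)

end Stmt10

/-- Theorem 1.5, congruence (1.15): for a prime `p > 3` and every `p`-adic integer `x`,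
`p²` divides `∑_{k=0}^{p-1} C(4k,2k) C(2k,k) 64^{-k} (x^k - (-2/p)(1-x)^k)` in `ℤ_p`. -/
theorem stmt_10 (p : ℕ) [Fact p.Prime] (hp3 : 3 < p) (x : ℤ_[p]) :
    (p : ℤ_[p]) ^ 2 ∣
      ∑ k ∈ Finset.range p,
        (Nat.choose (4 * k) (2 * k) : ℤ_[p]) * (Nat.choose (2 * k) k : ℤ_[p]) *
          (Ring.inverse (64 : ℤ_[p])) ^ k *
            (x ^ k - ((jacobiSym (-2) p : ℤ) : ℤ_[p]) * (1 - x) ^ k) := by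
  exact Stmt10.main hp3 x
end
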